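/- arXiv:2401.02289 — 7 statements merged into one kernel-verified Lean document; each statement's English description precedes it below -/
import Mathlib

section
/- Let α and β be finite nonempty types and let ρ : Matrix (α × β) (α × β) ℂ be a density matrix with blocks A^{xy}. If all blocks of ρ pairwise commute, i.e. A^{rs} * A^{mn} = A^{mn} * A^{rs} for all r, s, m, n : α, then ρ is separable. -/
open Matrix Kronecker ComplexOrder

noncomputable section

/-- A density matrix: positive semidefinite with trace 1. -/
def IsDensityMatrix {n : Type*} [Fintype n] (ρ : Matrix n n ℂ) : Prop :=
  ρ.PosSemidef ∧ ρ.trace = 1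

/-- Separability of a bipartite density matrix: a convex combination of Kronecker
products of density matrices of the subsystems. -/
def Separable {α β : Type*} [Fintype α] [Fintype β]
    (ρ : Matrix (α × β) (α × β) ℂ) : Prop :=
  ∃ (n : ℕ) (p : Fin n → ℝ) (σ : Fin n → Matrix α α ℂ) (τ : Fin n → Matrix β β ℂ),
    (∀ k, 0 ≤ p k) ∧ (∑ k, p k = 1) ∧
    (∀ k, (σ k).PosSemidef ∧ (σ k).trace = 1) ∧
    (∀ k, (τ k).PosSemidef ∧ (τ k).trace = 1) ∧
    ρ = ∑ k, (p k : ℂ) • (σ k ⊗ₖ τ k)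

/-- The `(x,y)`-block of a bipartite matrix. -/
def matBlock {α β : Type*} (ρ : Matrix (α × β) (α × β) ℂ) (x y : α) :
    Matrix β β ℂ :=
  Matrix.of fun j l => ρ (x, j) (y, l)

/-- The graph Laplacian quantum state of a simple graph. -/
def lapState {V : Type*} [Fintype V] [DecidableEq V] (G : SimpleGraph V)
    [DecidableRel G.Adj] : Matrix V V ℂ :=
  ((2 * G.edgeFinset.card : ℂ))⁻¹ • G.lapMatrix ℂ
set_option maxHeartbeats 1000000

private lemma psd_trace_zero {n : Type*} [Fintype n] [DecidableEq n] {B : Matrix n n ℂ}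
    (hB : B.PosSemidef) (ht : B.trace = 0) : B = 0 := by
  exact hB.trace_eq_zero_iff.mp ht

private lemma smul_psd {n : Type*} [Fintype n] {M : Matrix n n ℂ} (r : ℝ) (hr : 0 ≤ r)
    (hM : M.PosSemidef) : ((r : ℂ) • M).PosSemidef := by
  constructor
  · show ((r:ℂ) • M)ᴴ = _
    rw [Matrix.conjTranspose_smul, hM.1.eq]
    congr 1
    simp [Complex.star_def, Complex.conj_ofReal]
  · intro x
    exact (hM.smul (Complex.zero_le_real.2 hr)).2 x

theorem commuting_blocks_separable
    {α β : Type*} [Fintype α] [Fintype β] [Nonempty α] [Nonempty β]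
    (ρ : Matrix (α × β) (α × β) ℂ) (hρ : IsDensityMatrix ρ)
    (hcomm : ∀ r s m n : α,
      matBlock ρ r s * matBlock ρ m n = matBlock ρ m n * matBlock ρ r s) :
    Separable ρ := by
  classical
  obtain ⟨hpsd, htr⟩ := hρ
  set A : α → α → Matrix β β ℂ := fun x y => matBlock ρ x y with hAdef
  have hACom : ∀ x y m n, Commute (A x y) (A m n) := fun x y m n => hcomm x y m n
  have hadj : ∀ x y, (A x y)ᴴ = A y x := by
    intro x y
    ext j l
    have := congrFun (congrFun hpsd.1 (y, j)) (x, l)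
    simpa [Matrix.conjTranspose_apply, hAdef, matBlock] using this
  set H : α → α → Matrix β β ℂ := fun x y => (2:ℂ)⁻¹ • (A x y + A y x) with hHdef
  set K : α → α → Matrix β β ℂ := fun x y => (2*Complex.I)⁻¹ • (A x y - A y x) with hKdef
  have hHK : ∀ x y, A x y = H x y + Complex.I • K x y := by
    intro x y
    simp only [hHdef, hKdef]
    ext j l
    simp only [Matrix.add_apply, Matrix.smul_apply, Matrix.sub_apply, smul_eq_mul]
    have h2 : (2:ℂ) ≠ 0 := two_ne_zero
    have hI := Complex.I_ne_zero
    field_simp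
    ring_nf
  have hHherm : ∀ x y, (H x y).IsHermitian := by
    intro x y
    simp only [hHdef]
    show ((2:ℂ)⁻¹ • (A x y + A y x))ᴴ = _
    rw [Matrix.conjTranspose_smul, Matrix.conjTranspose_add, hadj, hadj]
    simp [add_comm]
  have hKherm : ∀ x y, (K x y).IsHermitian := by
    intro x y
    simp only [hKdef]
    show ((2*Complex.I)⁻¹ • (A x y - A y x))ᴴ = _
    have hstar : star ((2*Complex.I)⁻¹ : ℂ) = -(2*Complex.I)⁻¹ := by
      rw [star_inv₀, show star (2*Complex.I) = -(2*Complex.I) by simp [Complex.ext_iff], inv_neg]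
    rw [Matrix.conjTranspose_smul, Matrix.conjTranspose_sub, hadj, hadj, hstar]
    rw [neg_smul, ← smul_neg, neg_sub]
  -- the commuting family of Hermitian matrices
  set G : α × α × Bool → Matrix β β ℂ :=
    fun i => if i.2.2 then H i.1 i.2.1 else K i.1 i.2.1 with hGdef
  have hGherm : ∀ i, (G i).IsHermitian := by
    rintro ⟨x, y, (_|_)⟩
    · simpa [hGdef] using hKherm x y
    · simpa [hGdef] using hHherm x y
  have hGform : ∀ i, ∃ (c s : ℂ) (x y : α), G i = c • (A x y + s • A y x) := by
    rintro ⟨x, y, (_|_)⟩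
    · refine ⟨(2*Complex.I)⁻¹, -1, x, y, ?_⟩
      simp [hGdef, hKdef, sub_eq_add_neg]
    · refine ⟨(2:ℂ)⁻¹, 1, x, y, ?_⟩
      simp [hGdef, hHdef]
  have hGcomm : ∀ i j, Commute (G i) (G j) := by
    intro i j
    obtain ⟨c, s, x, y, hi⟩ := hGform i
    obtain ⟨c', t, m, n, hj⟩ := hGform j
    rw [hi, hj]
    apply Commute.smul_left
    apply Commute.smul_right
    apply Commute.add_left
    · exact (hACom x y m n).add_right ((hACom x y n m).smul_right t)
    · exact Commute.smul_left
        ((hACom y x m n).add_right ((hACom y x n m).smul_right t)) s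
  set T : α × α × Bool → (EuclideanSpace ℂ β →ₗ[ℂ] EuclideanSpace ℂ β) :=
    fun i => Matrix.toEuclideanLin (G i) with hTdef
  have hTsym : ∀ i, (T i).IsSymmetric :=
    fun i => Matrix.isHermitian_iff_isSymmetric.mp (hGherm i)
  have hmulT : ∀ (M N : Matrix β β ℂ),
      Matrix.toEuclideanLin M * Matrix.toEuclideanLin N = Matrix.toEuclideanLin (M * N) := by
    intro M N
    rw [Module.End.mul_eq_comp, Matrix.toEuclideanLin_eq_toLin, Matrix.toLin_mul _ (PiLp.basisFun 2 ℂ β)]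
  have hTcomm : Pairwise (Function.onFun Commute T) := by
    intro i j _
    show T i * T j = T j * T i
    simp only [hTdef]
    rw [hmulT, hmulT, hGcomm i j]
  set V : ((α × α × Bool) → ℂ) → Submodule ℂ (EuclideanSpace ℂ β) :=
    fun γ => ⨅ j, Module.End.eigenspace (T j) (γ j) with hVdef
  have hint : DirectSum.IsInternal V :=
    LinearMap.IsSymmetric.LinearMap.IsSymmetric.directSum_isInternal_of_pairwise_commute hTsym hTcomm
  have hOF := LinearMap.IsSymmetric.orthogonalFamily_iInf_eigenspaces hTsym
  have hfin : Set.Finite {γ | V γ ≠ ⊥} :=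
    WellFoundedGT.finite_ne_bot_of_iSupIndep hint.submodule_iSupIndep
  haveI : Fintype {γ : (α × α × Bool) → ℂ // V γ ≠ ⊥} := hfin.fintype
  have hint' : DirectSum.IsInternal (fun γ : {γ // V γ ≠ ⊥} => V γ.1) := by
    rw [DirectSum.isInternal_submodule_iff_iSupIndep_and_iSup_eq_top]
    constructor
    · exact hint.submodule_iSupIndep.comp Subtype.val_injective
    · rw [iSup_ne_bot_subtype]
      exact hint.submodule_iSup_eq_top
  have hOF' := hOF.comp (f := (Subtype.val : {γ // V γ ≠ ⊥} → ((α × α × Bool) → ℂ)))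
    Subtype.val_injective
  have hn : Module.finrank ℂ (EuclideanSpace ℂ β) = Fintype.card β := finrank_euclideanSpace
  set eβ : Fin (Fintype.card β) ≃ β := (Fintype.equivFin β).symm with heβ
  set b : OrthonormalBasis β ℂ (EuclideanSpace ℂ β) :=
    (hint'.subordinateOrthonormalBasis hn hOF').reindex eβ with hbdef
  set μ : β → (α × α × Bool) → ℂ :=
    fun a => (hint'.subordinateOrthonormalBasisIndex hn (eβ.symm a) hOF').1 with hμdef
  have hbeig : ∀ a i, T i (b a) = μ a i • b a := by
    intro a i
    have hmem : b a ∈ V (μ a) := by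
      rw [hbdef, OrthonormalBasis.reindex_apply]
      exact hint'.subordinateOrthonormalBasis_subordinate hn (eβ.symm a) hOF'
    rw [hVdef] at hmem
    exact Module.End.mem_eigenspace_iff.mp ((Submodule.mem_iInf _).mp hmem i)
  set u : β → β → ℂ := fun a => (WithLp.equiv 2 (β → ℂ)) (b a) with hudef
  have horth : ∀ a c, ∑ j, (starRingEnd ℂ) (u a j) * u c j = if a = c then 1 else 0 := by
    intro a c
    have h1 := b.orthonormal
    rw [orthonormal_iff_ite] at h1
    have h2 := h1 a c
    rw [PiLp.inner_apply] at h2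
    simpa [RCLike.inner_apply, hudef, mul_comm] using h2
  have hmvG : ∀ i a, G i *ᵥ u a = μ a i • u a := by
    intro i a
    have h1 := hbeig a i
    have h2 := congrArg (WithLp.equiv 2 (β → ℂ)) h1
    rw [hTdef] at h2
    simp only [WithLp.equiv_apply, Matrix.ofLp_toEuclideanLin_apply] at h2
    simpa [hudef] using h2
  set d : α → α → β → ℂ := fun x y a => μ a (x, y, true) + Complex.I * μ a (x, y, false)
    with hddef
  have hmv : ∀ x y a, A x y *ᵥ u a = d x y a • u a := by
    intro x y a
    have hH' : H x y *ᵥ u a = μ a (x,y,true) • u a := by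
      simpa [hGdef] using hmvG (x,y,true) a
    have hK' : K x y *ᵥ u a = μ a (x,y,false) • u a := by
      simpa [hGdef] using hmvG (x,y,false) a
    rw [hHK x y, Matrix.add_mulVec, hH', Matrix.smul_mulVec, hK', smul_smul, ← add_smul]
  set P : Matrix β β ℂ := Matrix.of (fun j a => u a j) with hPdef
  have hPuP : Pᴴ * P = 1 := by
    ext a c
    rw [Matrix.mul_apply, Matrix.one_apply]
    calc ∑ j, Pᴴ a j * P j c = ∑ j, (starRingEnd ℂ) (u a j) * u c j := by
          refine Finset.sum_congr rfl fun j _ => ?_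
          rw [Matrix.conjTranspose_apply, hPdef]
          rfl
      _ = if a = c then 1 else 0 := horth a c
  have hPP : P * Pᴴ = 1 := mul_eq_one_comm.mp hPuP
  have hPPent : ∀ j l, ∑ a, u a j * (starRingEnd ℂ) (u a l) = if j = l then 1 else 0 := by
    intro j l
    have h1 := congrFun (congrFun hPP j) l
    rw [Matrix.mul_apply] at h1
    calc ∑ a, u a j * (starRingEnd ℂ) (u a l)
        = ∑ a, P j a * Pᴴ a l := by
          refine Finset.sum_congr rfl fun a _ => ?_
          rw [Matrix.conjTranspose_apply, hPdef]
          rfl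
      _ = (1 : Matrix β β ℂ) j l := h1
      _ = if j = l then 1 else 0 := Matrix.one_apply
  have hent : ∀ x y j l, A x y j l = ∑ a, d x y a * (u a j * (starRingEnd ℂ) (u a l)) := by
    intro x y j l
    -- A x y j l = ∑ m, A x y j m * δ m l  = ∑ m, A x y j m * (∑ a, u a m * conj (u a l))
    calc A x y j l = ∑ m, A x y j m * (if m = l then 1 else 0) := by
          simp
      _ = ∑ m, A x y j m * ∑ a, u a m * (starRingEnd ℂ) (u a l) := by
          refine Finset.sum_congr rfl fun m _ => by rw [hPPent m l]
      _ = ∑ m, ∑ a, (starRingEnd ℂ) (u a l) * (A x y j m * u a m) := by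
          refine Finset.sum_congr rfl fun m _ => ?_
          rw [Finset.mul_sum]
          exact Finset.sum_congr rfl fun a _ => by ring
      _ = ∑ a, ∑ m, (starRingEnd ℂ) (u a l) * (A x y j m * u a m) := Finset.sum_comm
      _ = ∑ a, (starRingEnd ℂ) (u a l) * (d x y a * u a j) := by
          refine Finset.sum_congr rfl fun a _ => ?_
          rw [← Finset.mul_sum]
          congr 1
          have h2 := congrFun (hmv x y a) j
          simpa [Matrix.mulVec, dotProduct] using h2
      _ = ∑ a, d x y a * (u a j * (starRingEnd ℂ) (u a l)) :=
          Finset.sum_congr rfl fun a _ => by ring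
  -- the α-side matrices
  set Q : β → Matrix (α × β) α ℂ :=
    fun a => Matrix.of (fun p z => if p.1 = z then u a p.2 else 0) with hQdef
  set B : β → Matrix α α ℂ := fun a => (Q a)ᴴ * ρ * Q a with hBdef
  have hBpsd : ∀ a, (B a).PosSemidef := fun a => hpsd.conjTranspose_mul_mul_same (Q a)
  have hBentry : ∀ a x y, B a x y = d x y a := by
    intro a x y
    have e1 : B a x y = ∑ q : α × β, (∑ p : α × β, (starRingEnd ℂ) (Q a p x) * ρ p q) * Q a q y := by
      simp only [hBdef]
      rw [Matrix.mul_apply]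
      refine Finset.sum_congr rfl fun q _ => ?_
      congr 1
    have e2 : ∀ q : α × β, (∑ p : α × β, (starRingEnd ℂ) (Q a p x) * ρ p q)
        = ∑ j, (starRingEnd ℂ) (u a j) * ρ (x, j) q := by
      intro q
      rw [Fintype.sum_prod_type]
      rw [Finset.sum_eq_single x]
      · refine Finset.sum_congr rfl fun j _ => ?_
        simp [hQdef]
      · intro z _ hz
        apply Finset.sum_eq_zero
        intro j _
        simp [hQdef, hz]
      · intro h
        exact absurd (Finset.mem_univ x) h
    have e3 : B a x y = ∑ l, (∑ j, (starRingEnd ℂ) (u a j) * ρ (x, j) (y, l)) * u a l := by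
      rw [e1]
      rw [Fintype.sum_prod_type]
      rw [Finset.sum_eq_single y]
      · refine Finset.sum_congr rfl fun l _ => ?_
        rw [e2 (y, l)]
        simp [hQdef]
      · intro z _ hz
        apply Finset.sum_eq_zero
        intro l _
        simp [hQdef, hz]
      · intro h
        exact absurd (Finset.mem_univ y) h
    rw [e3]
    calc ∑ l, (∑ j, (starRingEnd ℂ) (u a j) * ρ (x, j) (y, l)) * u a l
        = ∑ l, ∑ j, ((starRingEnd ℂ) (u a j) * ρ (x, j) (y, l)) * u a l :=
          Finset.sum_congr rfl fun l _ => Finset.sum_mul _ _ _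
      _ = ∑ j, ∑ l, ((starRingEnd ℂ) (u a j) * ρ (x, j) (y, l)) * u a l := Finset.sum_comm
      _ = ∑ j, (starRingEnd ℂ) (u a j) * (∑ l, A x y j l * u a l) := by
          refine Finset.sum_congr rfl fun j _ => ?_
          rw [Finset.mul_sum]
          refine Finset.sum_congr rfl fun l _ => ?_
          have hAρ : A x y j l = ρ (x, j) (y, l) := rfl
          rw [hAρ]; ring
      _ = ∑ j, (starRingEnd ℂ) (u a j) * (d x y a * u a j) := by
          refine Finset.sum_congr rfl fun j _ => ?_
          congr 1
          have h2 := congrFun (hmv x y a) j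
          simpa [Matrix.mulVec, dotProduct] using h2
      _ = d x y a * ∑ j, (starRingEnd ℂ) (u a j) * u a j := by
          rw [Finset.mul_sum]
          exact Finset.sum_congr rfl fun j _ => by ring
      _ = d x y a := by rw [horth a a]; simp
  -- the β-side matrices
  set τ : β → Matrix β β ℂ := fun a => Matrix.vecMulVec (u a) (star (u a)) with hτdef
  have hτpsd : ∀ a, (τ a).PosSemidef := by
    intro a
    have h1 : τ a = Matrix.replicateCol (Fin 1) (u a) * (Matrix.replicateCol (Fin 1) (u a))ᴴ := by
      simp only [hτdef]
      rw [Matrix.conjTranspose_replicateCol, Matrix.vecMulVec_eq (Fin 1)]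
      rfl
    rw [h1]
    exact Matrix.posSemidef_self_mul_conjTranspose _
  have hτent : ∀ a j l, τ a j l = u a j * (starRingEnd ℂ) (u a l) := by
    intro a j l
    rw [hτdef]
    rfl
  have hτtrace : ∀ a, (τ a).trace = 1 := by
    intro a
    have h1 : (τ a).trace = ∑ j, u a j * (starRingEnd ℂ) (u a j) := by
      rw [Matrix.trace]
      exact Finset.sum_congr rfl fun j _ => hτent a j j
    rw [h1]
    calc ∑ j, u a j * (starRingEnd ℂ) (u a j)
        = ∑ j, (starRingEnd ℂ) (u a j) * u a j := Finset.sum_congr rfl fun j _ => by ring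
      _ = 1 := by rw [horth a a]; simp
  -- diagonal entries and trace of B
  have hdiag_nonneg : ∀ a x, 0 ≤ B a x x := by
    intro a x
    have h := (hBpsd a).dotProduct_mulVec_nonneg (Pi.single x 1)
    have e : (star (Pi.single x 1) : α → ℂ) ⬝ᵥ (B a *ᵥ Pi.single x 1) = B a x x := by
      simp [dotProduct, Matrix.mulVec, Pi.single_apply, apply_ite (star : ℂ → ℂ)]
    rwa [e] at h
  have hBtraceC : ∀ a, (B a).trace = ∑ x, d x x a := by
    intro a
    rw [Matrix.trace]
    exact Finset.sum_congr rfl fun x _ => hBentry a x x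
  have htrace_nonneg : ∀ a, 0 ≤ (B a).trace := by
    intro a
    rw [Matrix.trace]
    exact Finset.sum_nonneg fun x _ => hdiag_nonneg a x
  set p : β → ℝ := fun a => ((B a).trace).re with hpdef
  have hp_nonneg : ∀ a, 0 ≤ p a := by
    intro a
    have := (Complex.le_def.mp (htrace_nonneg a)).1
    simpa [hpdef] using this
  have hptrace : ∀ a, (B a).trace = ((p a : ℝ) : ℂ) := by
    intro a
    have him := (Complex.le_def.mp (htrace_nonneg a)).2
    apply Complex.ext
    · simp [hpdef]
    · simp [hpdef, ← him]
  have hnorm1 : ∀ a, ∑ j, u a j * (starRingEnd ℂ) (u a j) = 1 := by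
    intro a
    calc ∑ j, u a j * (starRingEnd ℂ) (u a j)
        = ∑ j, (starRingEnd ℂ) (u a j) * u a j := Finset.sum_congr rfl fun j _ => by ring
      _ = 1 := by rw [horth a a]; simp
  have htrsum : ∑ a, (B a).trace = 1 := by
    calc ∑ a, (B a).trace = ∑ a, ∑ x, d x x a := Finset.sum_congr rfl fun a _ => hBtraceC a
      _ = ∑ a, ∑ x, ∑ j, d x x a * (u a j * (starRingEnd ℂ) (u a j)) := by
          refine Finset.sum_congr rfl fun a _ => Finset.sum_congr rfl fun x _ => ?_
          rw [← Finset.mul_sum, hnorm1 a, mul_one]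
      _ = ∑ x, ∑ a, ∑ j, d x x a * (u a j * (starRingEnd ℂ) (u a j)) := Finset.sum_comm
      _ = ∑ x, ∑ j, ∑ a, d x x a * (u a j * (starRingEnd ℂ) (u a j)) :=
          Finset.sum_congr rfl fun x _ => Finset.sum_comm
      _ = ∑ x : α, ∑ j : β, ρ (x, j) (x, j) :=
          Finset.sum_congr rfl fun x _ => Finset.sum_congr rfl fun j _ => (hent x x j j).symm
      _ = ρ.trace := by
          rw [Matrix.trace, Fintype.sum_prod_type]
          rfl
      _ = 1 := htr
  have hpsum : ∑ a, p a = 1 := by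
    have h1 : ((∑ a, p a : ℝ) : ℂ) = ((1 : ℝ) : ℂ) := by
      push_cast
      rw [← htrsum]
      exact (Finset.sum_congr rfl fun a _ => (hptrace a).symm)
    exact_mod_cast h1
  -- the normalized matrices
  have hcardα : ((Fintype.card α : ℝ) : ℂ) ≠ 0 := by
    exact_mod_cast Nat.cast_ne_zero.mpr (Fintype.card_ne_zero (α := α))
  set σ : β → Matrix α α ℂ := fun a =>
    if p a = 0 then (((Fintype.card α : ℝ)⁻¹ : ℝ) : ℂ) • (1 : Matrix α α ℂ)
    else (((p a)⁻¹ : ℝ) : ℂ) • B a with hσdef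
  have hσprop : ∀ a, (σ a).PosSemidef ∧ (σ a).trace = 1 := by
    intro a
    by_cases h : p a = 0
    · have hσa : σ a = (((Fintype.card α : ℝ)⁻¹ : ℝ) : ℂ) • (1 : Matrix α α ℂ) := by
        simp only [hσdef, if_pos h]
      constructor
      · rw [hσa]
        exact smul_psd _ (by positivity) Matrix.PosSemidef.one
      · rw [hσa, Matrix.trace_smul, Matrix.trace_one, smul_eq_mul]
        push_cast
        field_simp
    · have hσa : σ a = (((p a)⁻¹ : ℝ) : ℂ) • B a := by
        simp only [hσdef, if_neg h]
      constructor
      · rw [hσa]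
        exact smul_psd _ (inv_nonneg.mpr (hp_nonneg a)) (hBpsd a)
      · rw [hσa, Matrix.trace_smul, smul_eq_mul, hptrace a]
        push_cast
        field_simp
  have hρsum : ρ = ∑ a, (B a) ⊗ₖ (τ a) := by
    ext pq rs
    obtain ⟨x, j⟩ := pq
    obtain ⟨y, l⟩ := rs
    rw [Matrix.sum_apply]
    calc ρ (x, j) (y, l) = ∑ a, d x y a * (u a j * (starRingEnd ℂ) (u a l)) := hent x y j l
      _ = ∑ a, (B a ⊗ₖ τ a) (x, j) (y, l) := by
          refine Finset.sum_congr rfl fun a _ => ?_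
          rw [Matrix.kroneckerMap_apply, hBentry, hτent]
  have hρfinal : ρ = ∑ a, ((p a : ℝ) : ℂ) • (σ a ⊗ₖ τ a) := by
    rw [hρsum]
    refine Finset.sum_congr rfl fun a _ => ?_
    by_cases h : p a = 0
    · have hB0 : B a = 0 := psd_trace_zero (hBpsd a) (by rw [hptrace a, h]; simp)
      rw [hB0, h]
      simp [Matrix.zero_kronecker]
    · simp only [hσdef, if_neg h]
      rw [Matrix.smul_kronecker, smul_smul]
      rw [show ((p a : ℝ) : ℂ) * (((p a)⁻¹ : ℝ) : ℂ) = 1 by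
        push_cast
        exact mul_inv_cancel₀ (Complex.ofReal_ne_zero.mpr h)]
      rw [one_smul]
  refine ⟨Fintype.card β, fun k => p (eβ k), fun k => σ (eβ k), fun k => τ (eβ k),
    fun k => hp_nonneg _, ?_, fun k => hσprop _, fun k => ⟨hτpsd _, hτtrace _⟩, ?_⟩
  · rw [Equiv.sum_comp eβ p]
    exact hpsum
  · rw [hρfinal]
    exact (Equiv.sum_comp eβ _).symm
end
end

section
/- Let W be a finite nonempty type and let ρ : Matrix (W × Fin 2) (W × Fin 2) ℂ be a density matrix such that ρ (u,a) (w,b) = 0 whenever a ≠ b. Then ρ is separable. (This is the matrix form of the theorem that the graph Laplacian state of a weighted graph in which every edge joins two vertices whose second labels are both odd or both even is separable.) -/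
open Matrix Kronecker ComplexOrder

noncomputable section

lemma psd_diag_nonneg {n : Type*} [Fintype n] [DecidableEq n] {M : Matrix n n ℂ}
    (h : M.PosSemidef) (i : n) : 0 ≤ M i i := by
  simpa [dotProduct, Pi.single_apply, mulVec] using h.dotProduct_mulVec_nonneg (Pi.single i 1)

lemma psd_eq_zero_of_trace {n : Type*} [Fintype n] [DecidableEq n] {M : Matrix n n ℂ}
    (h : M.PosSemidef) (ht : M.trace = 0) : M = 0 := by
  have hd : ∀ i, M i i = 0 := fun i =>
    (Finset.sum_eq_zero_iff_of_nonneg (fun j _ => psd_diag_nonneg h j)).mp ht i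
      (Finset.mem_univ i)
  ext i j
  have h1 : M *ᵥ Pi.single j 1 = 0 := by
    apply (Matrix.PosSemidef.dotProduct_mulVec_zero_iff h (Pi.single j 1)).mp
    simpa [dotProduct, Pi.single_apply, mulVec] using hd j
  simpa [mulVec, dotProduct, Pi.single_apply] using congrFun h1 i

lemma psd_smul_real {c : ℝ} (hc : 0 ≤ c) {n : Type*} [Fintype n] {M : Matrix n n ℂ}
    (h : M.PosSemidef) : ((c:ℂ) • M).PosSemidef := by
  refine Matrix.PosSemidef.of_dotProduct_mulVec_nonneg ?_ ?_
  · unfold Matrix.IsHermitian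
    rw [conjTranspose_smul, h.1]
    simp [Complex.conj_ofReal]
  · intro x
    rw [smul_mulVec, dotProduct_smul]
    exact smul_nonneg (by exact_mod_cast hc) (h.dotProduct_mulVec_nonneg x)

theorem parity_preserving_state_separable
    {W : Type*} [Fintype W] [Nonempty W]
    (ρ : Matrix (W × Fin 2) (W × Fin 2) ℂ) (hρ : IsDensityMatrix ρ)
    (hzero : ∀ (u w : W) (a b : Fin 2), a ≠ b → ρ (u, a) (w, b) = 0) :
    Separable ρ := by
  classical
  obtain ⟨hpsd, htr⟩ := hρ
  set B : Fin 2 → Matrix W W ℂ := fun a => ρ.submatrix (fun u => (u, a)) (fun u => (u, a))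
    with hB
  have hBpsd : ∀ a, (B a).PosSemidef := fun a => hpsd.submatrix _
  set p : Fin 2 → ℝ := fun a => ((B a).trace).re with hp
  have htnn : ∀ a, 0 ≤ (B a).trace := fun a =>
    Finset.sum_nonneg fun i _ => psd_diag_nonneg (hBpsd a) i
  have hpnn : ∀ a, 0 ≤ p a := fun a => (Complex.le_def.mp (htnn a)).1
  have htp : ∀ a, (B a).trace = (p a : ℂ) := by
    intro a
    have him := (Complex.le_def.mp (htnn a)).2
    apply Complex.ext
    · simp [hp]
    · simpa using him.symm
  have hsum : ∑ a, p a = 1 := by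
    have h1 : ρ.trace = ∑ a, (B a).trace := by
      rw [Matrix.trace]
      rw [Fintype.sum_prod_type]
      rw [Finset.sum_comm]
      rfl
    rw [htr] at h1
    simp_rw [htp] at h1
    have := congrArg Complex.re h1
    simpa using this.symm
  set σ : Fin 2 → Matrix W W ℂ := fun a =>
    if p a = 0 then (((Fintype.card W : ℝ)⁻¹ : ℂ)) • (1 : Matrix W W ℂ)
    else (((p a)⁻¹ : ℝ) : ℂ) • B a with hσ
  set τ : Fin 2 → Matrix (Fin 2) (Fin 2) ℂ := fun a => Matrix.diagonal (Pi.single a 1)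
    with hτ
  refine ⟨2, p, σ, τ, hpnn, hsum, ?_, ?_, ?_⟩
  · intro a
    by_cases h0 : p a = 0
    · simp only [hσ, if_pos h0]
      constructor
      · have hcast : ((↑(Fintype.card W) : ℂ))⁻¹ = ((((Fintype.card W : ℝ))⁻¹ : ℝ) : ℂ) := by
          push_cast
          rfl
        rw [show ((↑(↑(Fintype.card W) : ℝ) : ℂ))⁻¹ • (1 : Matrix W W ℂ)
            = ((((Fintype.card W : ℝ))⁻¹ : ℝ) : ℂ) • (1 : Matrix W W ℂ) by push_cast; rfl]
        exact psd_smul_real (by positivity) (Matrix.PosSemidef.one : (1 : Matrix W W ℂ).PosSemidef)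
      · rw [Matrix.trace_smul, Matrix.trace_one]
        have : (Fintype.card W : ℂ) ≠ 0 := by
          exact_mod_cast Nat.cast_ne_zero.mpr Fintype.card_ne_zero
        simp only [smul_eq_mul, Complex.ofReal_natCast]
        field_simp
    · simp only [hσ, h0, if_neg h0]
      constructor
      · exact psd_smul_real (inv_nonneg.mpr (hpnn a)) (hBpsd a)
      · rw [Matrix.trace_smul, htp a, smul_eq_mul]
        push_cast
        field_simp
  · intro a
    constructor
    · exact Matrix.PosSemidef.diagonal (by
        intro i
        by_cases h : i = a <;> simp [Pi.single_apply, h])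
    · simp [hτ, Matrix.trace_diagonal]
  · ext ⟨u, b⟩ ⟨w, c⟩
    simp only [Matrix.sum_apply, Matrix.smul_apply, Matrix.kroneckerMap_apply, hτ,
      Matrix.diagonal_apply, smul_eq_mul]
    by_cases hbc : b = c
    · subst hbc
      rw [Finset.sum_eq_single b]
      · simp only [Pi.single_apply, if_pos rfl]
        by_cases h0 : p b = 0
        · have hBz : B b = 0 := psd_eq_zero_of_trace (hBpsd b) (by rw [htp b, h0]; simp)
          have : ρ (u, b) (w, b) = 0 := by
            have := congrFun (congrFun hBz u) w
            simpa [hB] using this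
          simp [this, h0]
        · simp only [hσ, if_neg h0, Matrix.smul_apply, smul_eq_mul]
          have : ρ (u, b) (w, b) = B b u w := rfl
          rw [this]
          have hpb : (p b : ℂ) ≠ 0 := by exact_mod_cast h0
          push_cast
          field_simp
      · intro k _ hk
        simp [Pi.single_apply, hk.symm]
      · simp
    · rw [hzero u w b c hbc]
      symm
      apply Finset.sum_eq_zero
      intro k _
      simp [hbc]
end
end

section
/- Let W be a finite type with decidable equality and let G be a simple graph on W × Fin 2 with at least one edge such that every edge joins vertices with equal second coordinate, i.e. G.Adj (u,a) (w,b) → a = b for all u, w : W and a, b : Fin 2. Then the graph Laplacian state ρ_G is separable (as a state on ℂ^W ⊗ ℂ²). -/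
open Matrix Kronecker ComplexOrder

noncomputable section

lemma aux_smulPSD {n : Type*} [Fintype n] {A : Matrix n n ℂ} (hA : A.PosSemidef)
    {c : ℝ} (hc : 0 ≤ c) : ((c : ℂ) • A).PosSemidef := by
  rw [posSemidef_iff_dotProduct_mulVec] at hA ⊢
  constructor
  · unfold Matrix.IsHermitian
    rw [conjTranspose_smul, hA.1]
    simp
  · intro x
    rw [smul_mulVec, dotProduct_smul, smul_eq_mul]
    exact mul_nonneg (by exact_mod_cast hc) (hA.2 x)

lemma aux_lapPSD {V : Type*} [Fintype V] [DecidableEq V]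
    (G : SimpleGraph V) [DecidableRel G.Adj] : (G.lapMatrix ℂ).PosSemidef := by
  obtain ⟨B, hB⟩ : ∃ B : Matrix V V ℝ, G.lapMatrix ℝ = Bᴴ * B := by
    open scoped MatrixOrder in
    exact CStarAlgebra.nonneg_iff_eq_star_mul_self.mp (SimpleGraph.posSemidef_lapMatrix ℝ G).nonneg
  have hmap : G.lapMatrix ℂ = (G.lapMatrix ℝ).map (Complex.ofRealHom : ℝ →+* ℂ) := by
    ext u w
    simp only [SimpleGraph.lapMatrix, SimpleGraph.degMatrix, Matrix.sub_apply, Matrix.map_apply,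
      Matrix.diagonal, Matrix.of_apply, SimpleGraph.adjMatrix_apply]
    split <;> split <;> simp
  rw [hmap, hB, Matrix.map_mul (f := (Complex.ofRealHom : ℝ →+* ℂ))]
  have : Bᴴ.map (Complex.ofRealHom : ℝ →+* ℂ) = (B.map (Complex.ofRealHom : ℝ →+* ℂ))ᴴ := by
    ext u w; simp [Matrix.conjTranspose_apply]
  rw [this]
  exact Matrix.posSemidef_conjTranspose_mul_self _

lemma aux_lapTrace {V : Type*} [Fintype V] [DecidableEq V]
    (G : SimpleGraph V) [DecidableRel G.Adj] :
    (G.lapMatrix ℂ).trace = ((2 * G.edgeFinset.card : ℕ) : ℂ) := by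
  have : (G.lapMatrix ℂ).trace = ((∑ v, G.degree v : ℕ) : ℂ) := by
    simp [Matrix.trace, Matrix.diag, SimpleGraph.lapMatrix, SimpleGraph.degMatrix]
  rw [this, SimpleGraph.sum_degrees_eq_twice_card_edges]

/-- The layer graph on `W` induced by the label `a`. -/
def layerGraph {W : Type*} (G : SimpleGraph (W × Fin 2)) (a : Fin 2) : SimpleGraph W where
  Adj u w := G.Adj (u, a) (w, a)
  symm := ⟨fun _ _ h => G.adj_symm h⟩
  loopless := ⟨fun _ h => G.irrefl h⟩

instance {W : Type*} (G : SimpleGraph (W × Fin 2)) [DecidableRel G.Adj] (a : Fin 2) :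
    DecidableRel (layerGraph G a).Adj :=
  fun u w => inferInstanceAs (Decidable (G.Adj (u, a) (w, a)))

lemma layer_degree {W : Type*} [Fintype W] [DecidableEq W]
    (G : SimpleGraph (W × Fin 2)) [DecidableRel G.Adj]
    (hAdj : ∀ (u w : W) (a b : Fin 2), G.Adj (u, a) (w, b) → a = b)
    (u : W) (a : Fin 2) : G.degree (u, a) = (layerGraph G a).degree u := by
  rw [← SimpleGraph.card_neighborFinset_eq_degree, ← SimpleGraph.card_neighborFinset_eq_degree]
  have h : G.neighborFinset (u, a) =
      ((layerGraph G a).neighborFinset u).image (fun w => (w, a)) := by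
    ext ⟨w, b⟩
    simp only [SimpleGraph.mem_neighborFinset, Finset.mem_image, Prod.mk.injEq]
    constructor
    · intro h
      have hb := hAdj u w a b h
      subst hb
      exact ⟨w, h, rfl, rfl⟩
    · rintro ⟨w', hw', rfl, rfl⟩; exact hw'
  rw [h, Finset.card_image_of_injective _ (fun x y hxy => by simpa using hxy)]

lemma layer_block {W : Type*} [Fintype W] [DecidableEq W]
    (G : SimpleGraph (W × Fin 2)) [DecidableRel G.Adj]
    (hAdj : ∀ (u w : W) (a b : Fin 2), G.Adj (u, a) (w, b) → a = b)
    (u w : W) (a b : Fin 2) :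
    G.lapMatrix ℂ (u, a) (w, b) =
      if a = b then (layerGraph G a).lapMatrix ℂ u w else 0 := by
  by_cases hab : a = b
  · subst hab
    rw [if_pos rfl]
    simp only [SimpleGraph.lapMatrix, Matrix.sub_apply, SimpleGraph.degMatrix,
      Matrix.diagonal_apply, SimpleGraph.adjMatrix_apply, Prod.mk.injEq]
    congr 1
    by_cases huw : u = w
    · subst huw; simp [layer_degree G hAdj u a]
    · simp [huw]
  · have hnadj : ¬ G.Adj (u, a) (w, b) := fun h => hab (hAdj u w a b h)
    rw [if_neg hab]
    simp [SimpleGraph.lapMatrix, SimpleGraph.degMatrix, Matrix.diagonal_apply,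
      hnadj, Prod.mk.injEq, hab]

lemma lap_empty {V : Type*} [Fintype V] [DecidableEq V]
    (H : SimpleGraph V) [DecidableRel H.Adj] (h : H.edgeFinset.card = 0) :
    H.lapMatrix ℂ = 0 := by
  have hadj : ∀ u w, ¬ H.Adj u w := by
    intro u w hw
    have hm : s(u, w) ∈ H.edgeFinset := by simp [SimpleGraph.mem_edgeFinset, hw]
    simp [Finset.card_eq_zero.mp h] at hm
  have hdeg : ∀ u, H.degree u = 0 := by
    intro u
    rw [← SimpleGraph.card_neighborFinset_eq_degree, Finset.card_eq_zero]
    ext w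
    simp [SimpleGraph.mem_neighborFinset, hadj]
  ext u w
  simp [SimpleGraph.lapMatrix, SimpleGraph.degMatrix, Matrix.diagonal_apply, hadj, hdeg]

theorem equal_second_label_edges_separable
    {W : Type*} [Fintype W] [DecidableEq W] [Nonempty W]
    (G : SimpleGraph (W × Fin 2)) [DecidableRel G.Adj]
    (hE : G.edgeFinset.Nonempty)
    (hAdj : ∀ (u w : W) (a b : Fin 2), G.Adj (u, a) (w, b) → a = b) :
    Separable (lapState G) := by
  classical
  set c : ℕ := 2 * G.edgeFinset.card with hc
  have hcpos : 0 < c := by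
    have := Finset.card_pos.mpr hE
    omega
  have hcc : (c : ℂ) ≠ 0 := Nat.cast_ne_zero.mpr hcpos.ne'
  set d : Fin 2 → ℕ := fun a => 2 * (layerGraph G a).edgeFinset.card with hd
  have htr : ∀ a, ((layerGraph G a).lapMatrix ℂ).trace = (d a : ℂ) := fun a =>
    aux_lapTrace (layerGraph G a)
  have hsum : ∑ a : Fin 2, d a = c := by
    have h1 : ∀ a : Fin 2, d a = ∑ u : W, (layerGraph G a).degree u := fun a =>
      (SimpleGraph.sum_degrees_eq_twice_card_edges _).symm
    have h2 : c = ∑ v : W × Fin 2, G.degree v :=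
      (SimpleGraph.sum_degrees_eq_twice_card_edges _).symm
    rw [h2, Fintype.sum_prod_type]
    simp_rw [h1, layer_degree G hAdj]
    exact Finset.sum_comm
  set p : Fin 2 → ℝ := fun a => (d a : ℝ) / c with hp
  set σ : Fin 2 → Matrix W W ℂ := fun a =>
    if d a = 0 then ((Fintype.card W : ℂ))⁻¹ • (1 : Matrix W W ℂ)
    else ((d a : ℂ))⁻¹ • (layerGraph G a).lapMatrix ℂ with hσ
  set τ : Fin 2 → Matrix (Fin 2) (Fin 2) ℂ := fun a =>
    Matrix.diagonal (fun j => if j = a then 1 else 0) with hτ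
  refine ⟨2, p, σ, τ, ?_, ?_, ?_, ?_, ?_⟩
  · intro k; exact div_nonneg (Nat.cast_nonneg _) (Nat.cast_nonneg _)
  · rw [hp, ← Finset.sum_div, ← Nat.cast_sum, hsum, div_self (Nat.cast_ne_zero.mpr hcpos.ne' : (c:ℝ) ≠ 0)]
  · intro k
    by_cases h : d k = 0
    · have hσk : σ k = ((Fintype.card W : ℂ))⁻¹ • (1 : Matrix W W ℂ) := by
        simp only [hσ, h, if_true]
      rw [hσk]
      constructor
      · have hcast : (((Fintype.card W : ℝ)⁻¹ : ℝ) : ℂ) = ((Fintype.card W : ℂ))⁻¹ := by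
          rw [Complex.ofReal_inv, Complex.ofReal_natCast]
        rw [← hcast]
        exact aux_smulPSD Matrix.PosSemidef.one (inv_nonneg.mpr (Nat.cast_nonneg _))
      · rw [Matrix.trace_smul, Matrix.trace_one, smul_eq_mul]
        have hW : (Fintype.card W : ℂ) ≠ 0 := Nat.cast_ne_zero.mpr Fintype.card_ne_zero
        field_simp
    · have hσk : σ k = ((d k : ℂ))⁻¹ • (layerGraph G k).lapMatrix ℂ := by
        simp only [hσ, h, if_false]
      rw [hσk]
      constructor
      · have hcast : (((d k : ℝ)⁻¹ : ℝ) : ℂ) = ((d k : ℂ))⁻¹ := by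
          rw [Complex.ofReal_inv, Complex.ofReal_natCast]
        rw [← hcast]
        exact aux_smulPSD (aux_lapPSD _) (inv_nonneg.mpr (Nat.cast_nonneg _))
      · rw [Matrix.trace_smul, htr, smul_eq_mul]
        have : (d k : ℂ) ≠ 0 := Nat.cast_ne_zero.mpr h
        field_simp
  · intro k
    constructor
    · rw [hτ]
      refine Matrix.posSemidef_diagonal_iff.mpr fun i => ?_
      split <;> simp
    · rw [hτ, Matrix.trace_diagonal]
      simp
  · -- the matrix identity
    have keyM : ∀ k : Fin 2, (p k : ℂ) • (σ k ⊗ₖ τ k)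
        = (c : ℂ)⁻¹ • ((layerGraph G k).lapMatrix ℂ ⊗ₖ τ k) := by
      intro k
      by_cases h : d k = 0
      · have h0 : (layerGraph G k).edgeFinset.card = 0 := by
          have h' : 2 * (layerGraph G k).edgeFinset.card = 0 := h
          omega
        have hz : (layerGraph G k).lapMatrix ℂ = 0 := lap_empty _ h0
        have hp0 : p k = 0 := by simp [hp, h]
        rw [hz, hp0]
        simp
      · have hσk : σ k = ((d k : ℂ))⁻¹ • (layerGraph G k).lapMatrix ℂ := by
          simp only [hσ, h, if_false]
        rw [hσk, Matrix.smul_kronecker, smul_smul]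
        congr 1
        have hdk : (d k : ℂ) ≠ 0 := Nat.cast_ne_zero.mpr h
        rw [hp]
        push_cast
        rw [div_eq_mul_inv, mul_right_comm, mul_inv_cancel₀ hdk, one_mul]
    have hlap : G.lapMatrix ℂ = ∑ k : Fin 2, (layerGraph G k).lapMatrix ℂ ⊗ₖ τ k := by
      ext ⟨u, a⟩ ⟨w, b⟩
      rw [layer_block G hAdj, Matrix.sum_apply, Fin.sum_univ_two]
      simp only [Matrix.kroneckerMap_apply, hτ, Matrix.diagonal_apply]
      fin_cases a <;> fin_cases b <;> simp
    calc lapState G = (c : ℂ)⁻¹ • G.lapMatrix ℂ := by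
          rw [lapState, hc]; push_cast; ring_nf
      _ = ∑ k : Fin 2, (p k : ℂ) • (σ k ⊗ₖ τ k) := by
          rw [hlap, Finset.smul_sum]
          exact Finset.sum_congr rfl fun k _ => (keyM k).symm
end
end

section
/- Let α and β be finite nonempty types with decidable equality such that β has at least two elements, and let G be the simple graph on α × β whose adjacency relation is G.Adj (i,j) (k,l) ↔ (i = k ∧ j ≠ l) (i.e., every pair of distinct vertices with equal first coordinate is joined by an edge, and there are no other edges). Then the graph Laplacian state ρ_G is separable (as a state on ℂ^α ⊗ ℂ^β). -/
open Matrix Kronecker ComplexOrder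

noncomputable section

lemma psd_map {n : Type*} [Fintype n] [DecidableEq n] {A : Matrix n n ℝ}
    (h : A.PosSemidef) : (A.map Complex.ofReal).PosSemidef := by
  obtain ⟨B, rfl⟩ : ∃ B : Matrix n n ℝ, A = Bᴴ * B := by
    open scoped MatrixOrder in
    obtain ⟨B, hB⟩ := CStarAlgebra.nonneg_iff_eq_star_mul_self.mp h.nonneg
    exact ⟨B, hB⟩
  have h1 : (Bᴴ * B).map Complex.ofReal
      = (B.map Complex.ofReal)ᴴ * (B.map Complex.ofReal) := by
    rw [← Matrix.conjTranspose_map Complex.ofReal (fun a => (Complex.conj_ofReal a).symm)]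
    exact Matrix.map_mul (f := Complex.ofRealHom)
  rw [h1]
  exact Matrix.posSemidef_conjTranspose_mul_self _

lemma lapMatrix_map {V : Type*} [Fintype V] [DecidableEq V] (H : SimpleGraph V)
    [DecidableRel H.Adj] :
    H.lapMatrix ℂ = (H.lapMatrix ℝ).map Complex.ofReal := by
  ext i j
  simp [SimpleGraph.lapMatrix, SimpleGraph.degMatrix, Matrix.sub_apply,
    Matrix.diagonal_apply, apply_ite Complex.ofReal]

lemma lapMatrix_psd {V : Type*} [Fintype V] [DecidableEq V] (H : SimpleGraph V)
    [DecidableRel H.Adj] : (H.lapMatrix ℂ).PosSemidef := by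
  rw [lapMatrix_map]
  exact psd_map (H.posSemidef_lapMatrix ℝ)

lemma lapMatrix_trace {V : Type*} [Fintype V] [DecidableEq V] (H : SimpleGraph V)
    [DecidableRel H.Adj] :
    (H.lapMatrix ℂ).trace = (2 * H.edgeFinset.card : ℕ) := by
  rw [SimpleGraph.lapMatrix, Matrix.trace_sub, SimpleGraph.trace_adjMatrix, sub_zero,
    ← H.sum_degrees_eq_twice_card_edges]
  simp [SimpleGraph.degMatrix, Matrix.trace_diagonal]

lemma psd_smul {n : Type*} [Fintype n] {M : Matrix n n ℂ} (h : M.PosSemidef)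
    {c : ℝ} (hc : 0 ≤ c) : ((c : ℂ) • M).PosSemidef := by
  rw [Matrix.posSemidef_iff_dotProduct_mulVec]
  constructor
  · unfold Matrix.IsHermitian
    rw [Matrix.conjTranspose_smul, h.1.eq, Complex.star_def, Complex.conj_ofReal]
  · intro x
    rw [Matrix.smul_mulVec, dotProduct_smul]
    exact mul_nonneg (by exact_mod_cast Complex.zero_le_real.mpr hc) (h.dotProduct_mulVec_nonneg x)

lemma lapMatrix_entry {V : Type*} [Fintype V] [DecidableEq V] (H : SimpleGraph V)
    [DecidableRel H.Adj] (i j : V) :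
    H.lapMatrix ℂ i j
      = (if i = j then ((H.degree i : ℕ) : ℂ) else 0) - (if H.Adj i j then 1 else 0) := by
  simp [SimpleGraph.lapMatrix, SimpleGraph.degMatrix, Matrix.sub_apply,
    Matrix.diagonal_apply]


lemma lapState_isDM {V : Type*} [Fintype V] [DecidableEq V] (H : SimpleGraph V)
    [DecidableRel H.Adj] (h : H.edgeFinset.card ≠ 0) :
    (lapState H).PosSemidef ∧ (lapState H).trace = 1 := by
  have hcast : (2 * (H.edgeFinset.card : ℂ)) = ((2 * H.edgeFinset.card : ℕ) : ℂ) := by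
    push_cast; ring
  have hne : ((2 * H.edgeFinset.card : ℕ) : ℂ) ≠ 0 := by
    exact_mod_cast Nat.mul_ne_zero two_ne_zero h
  constructor
  · have h2 : ((2 * (H.edgeFinset.card : ℂ)))⁻¹
        = Complex.ofReal ((((2 * H.edgeFinset.card : ℕ) : ℝ))⁻¹) := by
      push_cast
      rfl
    rw [lapState, h2]
    exact psd_smul (lapMatrix_psd H) (inv_nonneg.mpr (Nat.cast_nonneg _))
  · rw [lapState, Matrix.trace_smul, lapMatrix_trace, hcast, smul_eq_mul,
      inv_mul_cancel₀ hne]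

lemma stdBasis_psd {α : Type*} [Fintype α] [DecidableEq α] (i : α) :
    (Matrix.single i i (1 : ℂ)).PosSemidef := by
  rw [Matrix.posSemidef_iff_dotProduct_mulVec]
  constructor
  · unfold Matrix.IsHermitian
    ext j k
    simp [Matrix.conjTranspose_apply, Matrix.single, and_comm, apply_ite star]
  · intro x
    have hmv : Matrix.single i i (1 : ℂ) *ᵥ x = fun j => if i = j then x i else 0 := by
      ext j
      simp [Matrix.mulVec, dotProduct, Matrix.single, ite_and]
    rw [hmv]
    have : (star x) ⬝ᵥ (fun j => if i = j then x i else 0) = star (x i) * x i := by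
      simp [dotProduct, mul_ite]
    rw [this]
    exact star_mul_self_nonneg (x i)

theorem equal_first_coordinate_complete_graph_separable
    {α β : Type*} [Fintype α] [Fintype β] [Nonempty α] [Nonempty β]
    [DecidableEq α] [DecidableEq β] [Nontrivial β]
    (G : SimpleGraph (α × β)) [DecidableRel G.Adj]
    (hAdj : ∀ (i k : α) (j l : β), G.Adj (i, j) (k, l) ↔ (i = k ∧ j ≠ l)) :
    Separable (lapState G) := by
  classical
  set a := Fintype.card α with ha
  set b := Fintype.card β with hb
  have hb2 : 2 ≤ b := Fintype.one_lt_card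
  have ha0 : a ≠ 0 := Fintype.card_ne_zero
  -- degrees
  have hdeg : ∀ v : α × β, G.degree v = b - 1 := by
    rintro ⟨i, j⟩
    have hnb : G.neighborFinset (i, j) = ({i} : Finset α) ×ˢ (({j} : Finset β)ᶜ) := by
      ext ⟨k, l⟩
      simp only [SimpleGraph.mem_neighborFinset, hAdj, Finset.mem_product,
        Finset.mem_singleton, Finset.mem_compl]
      constructor
      · rintro ⟨h1, h2⟩; exact ⟨h1.symm, fun h => h2 h.symm⟩
      · rintro ⟨h1, h2⟩; exact ⟨h1.symm, fun h => h2 h.symm⟩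
    rw [← SimpleGraph.card_neighborFinset_eq_degree, hnb]
    simp [Finset.card_compl]
    rfl
  have hdegT : ∀ j : β, (⊤ : SimpleGraph β).degree j = b - 1 := by
    intro j
    have hnb : (⊤ : SimpleGraph β).neighborFinset j = ({j}ᶜ : Finset β) := by
      ext l
      simp [SimpleGraph.mem_neighborFinset, ne_comm]
    rw [← SimpleGraph.card_neighborFinset_eq_degree, hnb]
    simp [Finset.card_compl]
    rfl
  have hE : 2 * G.edgeFinset.card = a * b * (b - 1) := by
    rw [← G.sum_degrees_eq_twice_card_edges]
    simp only [hdeg]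
    rw [Finset.sum_const, Finset.card_univ, Fintype.card_prod, smul_eq_mul]
  have hET : 2 * (⊤ : SimpleGraph β).edgeFinset.card = b * (b - 1) := by
    rw [← (⊤ : SimpleGraph β).sum_degrees_eq_twice_card_edges]
    simp only [hdegT]
    rw [Finset.sum_const, Finset.card_univ, smul_eq_mul]
  have hETne : (⊤ : SimpleGraph β).edgeFinset.card ≠ 0 := by
    intro h
    rw [h, Nat.mul_zero] at hET
    have : 1 ≤ b * (b - 1) :=
      Nat.one_le_iff_ne_zero.mpr (Nat.mul_ne_zero (by omega) (by omega))
    omega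
  set K := (⊤ : SimpleGraph β).lapMatrix ℂ with hK
  -- the key decomposition of the Laplacian
  have hLap : G.lapMatrix ℂ = ∑ i : α, (Matrix.single i i (1 : ℂ)) ⊗ₖ K := by
    ext ⟨i, j⟩ ⟨k, l⟩
    rw [Matrix.sum_apply]
    have hterm : ∀ i' : α,
        ((Matrix.single i' i' (1 : ℂ)) ⊗ₖ K) (i, j) (k, l)
          = if i' = i ∧ i = k then K j l else 0 := by
      intro i'
      rw [Matrix.kroneckerMap_apply]
      by_cases h1 : i' = i <;> by_cases h2 : i = k <;>
        simp [Matrix.single, h1, h2] <;> tauto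
    simp_rw [hterm]
    rw [lapMatrix_entry]
    by_cases h2 : i = k
    · subst h2
      simp only [and_true, Finset.sum_ite_eq', Finset.mem_univ, if_true]
      rw [hK, lapMatrix_entry]
      have hadj : G.Adj (i, j) (i, l) ↔ j ≠ l := by rw [hAdj]; tauto
      have hadjT : (⊤ : SimpleGraph β).Adj j l ↔ j ≠ l := by simp
      by_cases h3 : j = l
      · subst h3
        simp [hadj, hdeg, hdegT]
      · have hne : (i, j) ≠ (i, l) := fun h => h3 (congrArg Prod.snd h)
        simp [hadj, hadjT, h3, hne]
    · have hne : (i, j) ≠ (k, l) := fun h => h2 (congrArg Prod.fst h)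
      have hadj : ¬ G.Adj (i, j) (k, l) := by rw [hAdj]; tauto
      simp [h2, hne, hadj]
  -- assemble
  set e := (Fintype.equivFin α).symm with he
  refine ⟨a, fun _ => (a : ℝ)⁻¹,
    fun k => Matrix.single (e k) (e k) (1 : ℂ),
    fun _ => lapState (⊤ : SimpleGraph β), ?_, ?_, ?_, ?_, ?_⟩
  · intro k; positivity
  · rw [Finset.sum_const, Finset.card_univ, Fintype.card_fin, nsmul_eq_mul,
      mul_inv_cancel₀ (by exact_mod_cast ha0)]
  · intro k
    refine ⟨stdBasis_psd _, ?_⟩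
    simp [Matrix.trace, Matrix.diag, Matrix.single]
  · intro _
    exact lapState_isDM _ hETne
  · rw [lapState, hLap, Finset.smul_sum]
    rw [← Equiv.sum_comp e
      (fun i => (2 * (G.edgeFinset.card : ℂ))⁻¹ • ((Matrix.single i i (1 : ℂ)) ⊗ₖ K))]
    refine Finset.sum_congr rfl fun k _ => ?_
    rw [lapState, Matrix.kronecker_smul, smul_smul]
    congr 1
    have h1 : (2 * (G.edgeFinset.card : ℂ)) = ((a : ℂ)) * ((2 * (⊤ : SimpleGraph β).edgeFinset.card : ℕ) : ℂ) := by
      have hn : 2 * G.edgeFinset.card = a * (2 * (⊤ : SimpleGraph β).edgeFinset.card) := by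
        rw [hE, hET]; ring
      have hc := congrArg (fun n : ℕ => (n : ℂ)) hn
      push_cast at hc ⊢
      linear_combination hc
    have h2 : (2 * ((⊤ : SimpleGraph β).edgeFinset.card : ℂ)) = ((2 * (⊤ : SimpleGraph β).edgeFinset.card : ℕ) : ℂ) := by
      push_cast; ring
    rw [h1, h2, mul_inv, Complex.ofReal_inv, Complex.ofReal_natCast]
end
end

section
/- Let α and β be finite nonempty types with decidable equality and let G be a simple graph on α × β with at least one edge whose graph Laplacian state ρ_G satisfies ρ_G (x,j) (y,l) = ρ_G (x,l) (y,j) for all x, y : α and j, l : β (i.e., ρ_G equals its partial transpose over the β factor). Then ρ_G is separable (as a state on ℂ^α ⊗ ℂ^β). -/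
open Matrix Kronecker ComplexOrder

noncomputable section

section AuxSep

/-- rank-one real-vector matrix -/
def r1 {ι : Type*} (v : ι → ℝ) : Matrix ι ι ℂ := Matrix.of fun i j => ((v i * v j : ℝ) : ℂ)

lemma r1_apply {ι : Type*} (v : ι → ℝ) (i j : ι) : r1 v i j = ((v i * v j : ℝ) : ℂ) := rfl

lemma r1_posSemidef {ι : Type*} [Fintype ι] (v : ι → ℝ) : (r1 v).PosSemidef := by
  refine Matrix.PosSemidef.of_dotProduct_mulVec_nonneg ?_ ?_
  · ext i j
    simp [r1, conjTranspose_apply, mul_comm]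
  · intro x
    set z : ℂ := ∑ j, (v j : ℂ) * x j with hz
    have h1 : (r1 v) *ᵥ x = fun i => (v i : ℂ) * z := by
      funext i
      simp only [mulVec, dotProduct, r1, Matrix.of_apply, hz]
      push_cast
      rw [Finset.mul_sum]
      exact Finset.sum_congr rfl fun j _ => by ring
    have h2 : star x ⬝ᵥ ((r1 v) *ᵥ x) = star z * z := by
      rw [h1]
      simp only [dotProduct, Pi.star_apply, hz, star_sum, star_mul', Complex.conj_ofReal]
      rw [Finset.sum_mul]
      refine Finset.sum_congr rfl fun i _ => ?_
      rw [show star ((v i : ℝ) : ℂ) = ((v i : ℝ) : ℂ) from Complex.conj_ofReal _]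
      ring
    rw [h2]
    exact star_mul_self_nonneg _

lemma r1_trace {ι : Type*} [Fintype ι] (v : ι → ℝ) :
    (r1 v).trace = ((∑ i, v i ^ 2 : ℝ) : ℂ) := by
  simp [Matrix.trace, r1, Matrix.diag, sq]

lemma r1_neg {ι : Type*} (v : ι → ℝ) : r1 (-v) = r1 v := by
  ext i j; simp [r1]

lemma r1_kron {ι κ : Type*} (u : ι → ℝ) (v : κ → ℝ) :
    (r1 u) ⊗ₖ (r1 v) = r1 (fun p : ι × κ => u p.1 * v p.2) := by
  ext ⟨a, m⟩ ⟨b, n⟩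
  simp only [r1, kroneckerMap_apply, Matrix.of_apply]
  push_cast
  ring

lemma smul_posSemidef {ι : Type*} [Fintype ι] {M : Matrix ι ι ℂ} (hM : M.PosSemidef)
    {c : ℂ} (hc : 0 ≤ c) : (c • M).PosSemidef := by
  have hstar : star c = c := by
    have him : c.im = 0 := by
      have := (Complex.le_def.mp hc).2
      simpa using this.symm
    apply Complex.ext <;> simp [him]
  refine Matrix.PosSemidef.of_dotProduct_mulVec_nonneg ?_ ?_
  · show (c • M)ᴴ = c • M
    rw [Matrix.conjTranspose_smul, hM.1.eq, hstar]
  · intro x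
    have := hM.dotProduct_mulVec_nonneg x
    simp only [smul_mulVec, dotProduct_smul, smul_eq_mul]
    exact mul_nonneg hc this

lemma two_inv_nonneg : (0:ℂ) ≤ 2⁻¹ := by
  rw [show ((2:ℂ)⁻¹) = ((2⁻¹ : ℝ) : ℂ) by norm_num]
  exact Complex.zero_le_real.mpr (by norm_num)

/-- standard basis vector -/
def eR {ι : Type*} [DecidableEq ι] (x : ι) : ι → ℝ := fun a => if a = x then 1 else 0

/-- the vector of the edge Laplacian -/
def wv {ι : Type*} [DecidableEq ι] (p q : ι) : ι → ℝ :=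
  fun a => (if a = p then 1 else 0) - (if a = q then 1 else 0)

lemma wv_eq_mul₁ {α β : Type*} [DecidableEq α] [DecidableEq β] (x y : α) (j : β) :
    (fun p : α × β => (eR x - eR y) p.1 * eR j p.2) = wv (x, j) (y, j) := by
  funext ⟨a, m⟩
  simp only [eR, wv, Pi.sub_apply, Prod.mk.injEq]
  by_cases hax : a = x <;> by_cases hay : a = y <;> by_cases hmj : m = j <;>
    simp [hax, hay, hmj]

lemma wv_eq_mul₂ {α β : Type*} [DecidableEq α] [DecidableEq β] (x : α) (j l : β) :
    (fun p : α × β => eR x p.1 * (eR j - eR l) p.2) = wv (x, j) (x, l) := by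
  funext ⟨a, m⟩
  simp only [eR, wv, Pi.sub_apply, Prod.mk.injEq]
  by_cases hax : a = x <;> by_cases hmj : m = j <;> by_cases hml : m = l <;>
    simp [hax, hmj, hml]

/-- polarization identity -/
lemma polarization {α β : Type*} [Fintype α] [Fintype β] [DecidableEq α] [DecidableEq β]
    (u₁ u₂ : α → ℝ) (v₁ v₂ : β → ℝ) :
    (r1 (u₁ + u₂)) ⊗ₖ (r1 (v₁ - v₂)) + (r1 (u₁ - u₂)) ⊗ₖ (r1 (v₁ + v₂)) =
      (2 : ℂ) • (r1 (fun p : α × β => u₁ p.1 * v₁ p.2 - u₂ p.1 * v₂ p.2)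
        + r1 (fun p : α × β => u₁ p.1 * v₂ p.2 - u₂ p.1 * v₁ p.2)) := by
  ext ⟨a, m⟩ ⟨b, n⟩
  simp only [Matrix.add_apply, Matrix.smul_apply, kroneckerMap_apply, r1, Matrix.of_apply,
    Pi.add_apply, Pi.sub_apply, smul_eq_mul]
  push_cast
  ring

lemma adj_row_sum {V : Type*} [Fintype V] [DecidableEq V] (G : SimpleGraph V)
    [DecidableRel G.Adj] (a : V) : (∑ b, G.adjMatrix ℂ a b) = (G.degree a : ℂ) := by
  simp [SimpleGraph.adjMatrix_apply, SimpleGraph.degree, SimpleGraph.neighborFinset_eq_filter,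
    Finset.sum_boole]

lemma lap_decomp {V : Type*} [Fintype V] [DecidableEq V] (G : SimpleGraph V)
    [DecidableRel G.Adj] :
    G.lapMatrix ℂ = ∑ p : V × V, (if G.Adj p.1 p.2 then (2:ℂ)⁻¹ else 0) • r1 (wv p.1 p.2) := by
  ext c d
  rw [Matrix.sum_apply, Fintype.sum_prod_type]
  have hterm : ∀ a b : V, ((if G.Adj a b then (2:ℂ)⁻¹ else 0) • r1 (wv a b)) c d
      = 2⁻¹ * (G.adjMatrix ℂ a b * (((if c = a then (1:ℂ) else 0) - (if c = b then 1 else 0)) *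
        ((if d = a then (1:ℂ) else 0) - (if d = b then 1 else 0)))) := by
    intro a b
    by_cases h : G.Adj a b <;>
      simp [h, r1, wv, Matrix.smul_apply, SimpleGraph.adjMatrix_apply] <;> push_cast [apply_ite (fun r : ℝ => (r : ℂ))] <;> ring
  simp only [hterm]
  have expand : ∀ a b : V, 2⁻¹ * (G.adjMatrix ℂ a b * (((if c = a then (1:ℂ) else 0) - (if c = b then 1 else 0)) *
        ((if d = a then (1:ℂ) else 0) - (if d = b then 1 else 0))))
      = (2⁻¹ * (G.adjMatrix ℂ a b * (if c = a then (1:ℂ) else 0) * (if d = a then (1:ℂ) else 0))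
        + 2⁻¹ * (G.adjMatrix ℂ a b * (if c = b then (1:ℂ) else 0) * (if d = b then (1:ℂ) else 0)))
        - (2⁻¹ * (G.adjMatrix ℂ a b * (if c = a then (1:ℂ) else 0) * (if d = b then (1:ℂ) else 0))
        + 2⁻¹ * (G.adjMatrix ℂ a b * (if c = b then (1:ℂ) else 0) * (if d = a then (1:ℂ) else 0))) :=
    fun a b => by ring
  simp only [expand, Finset.sum_sub_distrib, Finset.sum_add_distrib]
  have S1 : ∑ a : V, ∑ b : V, 2⁻¹ * (G.adjMatrix ℂ a b * (if c = a then (1:ℂ) else 0) * (if d = a then (1:ℂ) else 0))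
      = if c = d then 2⁻¹ * (G.degree c : ℂ) else 0 := by
    have h : ∀ a : V, ∑ b : V, 2⁻¹ * (G.adjMatrix ℂ a b * (if c = a then (1:ℂ) else 0) * (if d = a then (1:ℂ) else 0))
        = if c = a then (if d = a then 2⁻¹ * (G.degree a : ℂ) else 0) else 0 := by
      intro a
      have key : ∑ b : V, 2⁻¹ * (G.adjMatrix ℂ a b * (if c = a then (1:ℂ) else 0) * (if d = a then (1:ℂ) else 0))
          = (if c = a then (1:ℂ) else 0) * (if d = a then (1:ℂ) else 0) * (2⁻¹ * (G.degree a : ℂ)) := by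
        rw [← adj_row_sum G a, Finset.mul_sum, Finset.mul_sum]
        exact Finset.sum_congr rfl fun b _ => by ring
      rw [key]
      by_cases h1 : c = a <;> by_cases h2 : d = a <;> simp [h1, h2]
    rw [Finset.sum_congr rfl fun a _ => h a, Finset.sum_ite_eq]
    simp only [Finset.mem_univ, if_true]
    by_cases hcd : c = d
    · subst hcd; simp
    · rw [if_neg (fun h : d = c => hcd h.symm), if_neg hcd]
  have S4 : ∑ a : V, ∑ b : V, 2⁻¹ * (G.adjMatrix ℂ a b * (if c = b then (1:ℂ) else 0) * (if d = b then (1:ℂ) else 0))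
      = if c = d then 2⁻¹ * (G.degree c : ℂ) else 0 := by
    have h : ∀ a : V, ∑ b : V, 2⁻¹ * (G.adjMatrix ℂ a b * (if c = b then (1:ℂ) else 0) * (if d = b then (1:ℂ) else 0))
        = if c = d then 2⁻¹ * G.adjMatrix ℂ a c else 0 := by
      intro a
      by_cases hcd : c = d
      · subst hcd
        have h2 : ∀ b : V, 2⁻¹ * (G.adjMatrix ℂ a b * (if c = b then (1:ℂ) else 0) * (if c = b then (1:ℂ) else 0))
            = if c = b then 2⁻¹ * G.adjMatrix ℂ a b else 0 := by
          intro b; by_cases h : c = b <;> simp [h] <;> ring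
        rw [Finset.sum_congr rfl fun b _ => h2 b, Finset.sum_ite_eq]
        simp
      · have h2 : ∀ b : V, 2⁻¹ * (G.adjMatrix ℂ a b * (if c = b then (1:ℂ) else 0) * (if d = b then (1:ℂ) else 0)) = 0 := by
          intro b; by_cases h : c = b <;> by_cases h' : d = b <;> simp_all
        simp [h2, hcd]
    rw [Finset.sum_congr rfl fun a _ => h a]
    by_cases hcd : c = d
    · simp only [hcd, if_true, ← Finset.mul_sum]
      have : ∑ a : V, G.adjMatrix ℂ a d = (G.degree d : ℂ) := by
        rw [show ∑ a : V, G.adjMatrix ℂ a d = ∑ a : V, G.adjMatrix ℂ d a from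
          Finset.sum_congr rfl fun a _ => by simp [SimpleGraph.adjMatrix_apply, G.adj_comm]]
        exact adj_row_sum G d
      rw [hcd, this]
    · simp [hcd]
  have S2 : ∑ a : V, ∑ b : V, 2⁻¹ * (G.adjMatrix ℂ a b * (if c = a then (1:ℂ) else 0) * (if d = b then (1:ℂ) else 0))
      = 2⁻¹ * G.adjMatrix ℂ c d := by
    have h : ∀ a : V, ∑ b : V, 2⁻¹ * (G.adjMatrix ℂ a b * (if c = a then (1:ℂ) else 0) * (if d = b then (1:ℂ) else 0))
        = if c = a then 2⁻¹ * G.adjMatrix ℂ a d else 0 := by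
      intro a
      have h2 : ∀ b : V, 2⁻¹ * (G.adjMatrix ℂ a b * (if c = a then (1:ℂ) else 0) * (if d = b then (1:ℂ) else 0))
          = if d = b then (if c = a then 2⁻¹ * G.adjMatrix ℂ a b else 0) else 0 := by
        intro b; by_cases h : c = a <;> by_cases h' : d = b <;> simp [h, h'] <;> ring
      rw [Finset.sum_congr rfl fun b _ => h2 b, Finset.sum_ite_eq]
      simp
    rw [Finset.sum_congr rfl fun a _ => h a, Finset.sum_ite_eq]
    simp
  have S3 : ∑ a : V, ∑ b : V, 2⁻¹ * (G.adjMatrix ℂ a b * (if c = b then (1:ℂ) else 0) * (if d = a then (1:ℂ) else 0))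
      = 2⁻¹ * G.adjMatrix ℂ c d := by
    have h : ∀ a : V, ∑ b : V, 2⁻¹ * (G.adjMatrix ℂ a b * (if c = b then (1:ℂ) else 0) * (if d = a then (1:ℂ) else 0))
        = if d = a then 2⁻¹ * G.adjMatrix ℂ a c else 0 := by
      intro a
      have h2 : ∀ b : V, 2⁻¹ * (G.adjMatrix ℂ a b * (if c = b then (1:ℂ) else 0) * (if d = a then (1:ℂ) else 0))
          = if c = b then (if d = a then 2⁻¹ * G.adjMatrix ℂ a b else 0) else 0 := by
        intro b; by_cases h : c = b <;> by_cases h' : d = a <;> simp [h, h'] <;> ring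
      rw [Finset.sum_congr rfl fun b _ => h2 b, Finset.sum_ite_eq]
      simp
    rw [Finset.sum_congr rfl fun a _ => h a, Finset.sum_ite_eq]
    simp [SimpleGraph.adjMatrix_apply, G.adj_comm]
  rw [S1, S2, S3, S4]
  simp only [SimpleGraph.lapMatrix, SimpleGraph.degMatrix, Matrix.sub_apply, Matrix.diagonal_apply]
  by_cases hcd : c = d
  · subst hcd
    by_cases hadj : G.Adj c c <;> simp [hadj] <;> ring
  · by_cases hadj : G.Adj c d <;> simp [hcd, hadj] <;> ring

section Construction
variable {α β : Type*} [Fintype α] [Fintype β] [Nonempty α] [Nonempty β]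
  [DecidableEq α] [DecidableEq β]
  (G : SimpleGraph (α × β)) [DecidableRel G.Adj]

/-- sign of a bool -/
def bsgn (t : Bool) : ℝ := if t then 1 else -1

/-- the α-factor -/
def sigF (k : ((α × β) × (α × β)) × Bool) : Matrix α α ℂ :=
  if G.Adj k.1.1 k.1.2 then
    (if k.1.1.2 = k.1.2.2 then (2:ℂ)⁻¹ • r1 (eR k.1.1.1 - eR k.1.2.1)
     else if k.1.1.1 = k.1.2.1 then r1 (eR k.1.1.1)
     else (2:ℂ)⁻¹ • r1 (eR k.1.1.1 + bsgn k.2 • eR k.1.2.1))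
  else r1 (eR (Classical.arbitrary α))

/-- the β-factor -/
def tauF (k : ((α × β) × (α × β)) × Bool) : Matrix β β ℂ :=
  if G.Adj k.1.1 k.1.2 then
    (if k.1.1.2 = k.1.2.2 then r1 (eR k.1.1.2)
     else if k.1.1.1 = k.1.2.1 then (2:ℂ)⁻¹ • r1 (eR k.1.1.2 - eR k.1.2.2)
     else (2:ℂ)⁻¹ • r1 (eR k.1.1.2 - bsgn k.2 • eR k.1.2.2))
  else r1 (eR (Classical.arbitrary β))

lemma eR_sq_sum {ι : Type*} [Fintype ι] [DecidableEq ι] (x : ι) :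
    ∑ i, (eR x i) ^ 2 = 1 := by
  simp [eR, sq, Finset.sum_ite_eq]

lemma eR_pm_sq_sum {ι : Type*} [Fintype ι] [DecidableEq ι] {x y : ι} (hxy : x ≠ y) (ε : ℝ)
    (hε : ε = 1 ∨ ε = -1) :
    ∑ i, ((eR x + ε • eR y) i) ^ 2 = 2 := by
  have h : ∀ i, ((eR x + ε • eR y) i) ^ 2 =
      (if i = x then 1 else 0) + (if i = y then ε ^ 2 else 0) := by
    intro i
    unfold eR
    simp only [Pi.add_apply, Pi.smul_apply, smul_eq_mul]
    by_cases h1 : i = x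
    · subst h1
      simp [hxy]
    · by_cases h2 : i = y <;> simp [h1, h2, hxy.symm] <;> ring
  rw [Finset.sum_congr rfl fun i _ => h i, Finset.sum_add_distrib]
  rcases hε with h | h <;> · simp [Finset.sum_ite_eq', h]; norm_num

lemma sigF_density (k : ((α × β) × (α × β)) × Bool) :
    (sigF G k).PosSemidef ∧ (sigF G k).trace = 1 := by
  unfold sigF
  split_ifs with h1 h2 h3
  · have hne : k.1.1.1 ≠ k.1.2.1 := by
      intro h
      exact (G.ne_of_adj h1) (Prod.ext h h2)
    refine ⟨smul_posSemidef (r1_posSemidef _) two_inv_nonneg, ?_⟩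
    rw [Matrix.trace_smul, r1_trace]
    rw [show (eR k.1.1.1 - eR k.1.2.1 : α → ℝ) = eR k.1.1.1 + (-1 : ℝ) • eR k.1.2.1 by
      funext i; simp [sub_eq_add_neg]]
    rw [eR_pm_sq_sum hne (-1) (Or.inr rfl)]
    norm_num
  · exact ⟨r1_posSemidef _, by rw [r1_trace, eR_sq_sum]; norm_num⟩
  · refine ⟨smul_posSemidef (r1_posSemidef _) two_inv_nonneg, ?_⟩
    rw [Matrix.trace_smul, r1_trace, eR_pm_sq_sum h3 (bsgn k.2)
      (by unfold bsgn; cases k.2 <;> simp)]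
    norm_num
  · exact ⟨r1_posSemidef _, by rw [r1_trace, eR_sq_sum]; norm_num⟩

lemma tauF_density (k : ((α × β) × (α × β)) × Bool) :
    (tauF G k).PosSemidef ∧ (tauF G k).trace = 1 := by
  unfold tauF
  split_ifs with h1 h2 h3
  · exact ⟨r1_posSemidef _, by rw [r1_trace, eR_sq_sum]; norm_num⟩
  · refine ⟨smul_posSemidef (r1_posSemidef _) two_inv_nonneg, ?_⟩
    rw [Matrix.trace_smul, r1_trace]
    rw [show (eR k.1.1.2 - eR k.1.2.2 : β → ℝ) = eR k.1.1.2 + (-1 : ℝ) • eR k.1.2.2 by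
      funext i; simp [sub_eq_add_neg]]
    rw [eR_pm_sq_sum h2 (-1) (Or.inr rfl)]
    norm_num
  · refine ⟨smul_posSemidef (r1_posSemidef _) two_inv_nonneg, ?_⟩
    rw [Matrix.trace_smul, r1_trace]
    rw [show (eR k.1.1.2 - bsgn k.2 • eR k.1.2.2 : β → ℝ)
        = eR k.1.1.2 + (-(bsgn k.2)) • eR k.1.2.2 by
      funext i; simp [sub_eq_add_neg]]
    rw [eR_pm_sq_sum h2 (-(bsgn k.2)) (by unfold bsgn; cases k.2 <;> simp)]
    norm_num
  · exact ⟨r1_posSemidef _, by rw [r1_trace, eR_sq_sum]; norm_num⟩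

lemma wv_cross {x y : α} {j l : β} :
    (fun q : α × β => eR x q.1 * eR j q.2 - eR y q.1 * eR l q.2) = wv (x, j) (y, l) := by
  funext ⟨a, m⟩
  simp only [eR, wv, Prod.mk.injEq, ite_and]
  by_cases h1 : a = x <;> by_cases h2 : m = j <;> by_cases h3 : a = y <;> by_cases h4 : m = l <;>
    · subst_vars; simp_all

/-- sum over the Bool index, degenerate case j = l -/
lemma Fsum_deg₁ {x y : α} {j l : β} (hadj : G.Adj (x, j) (y, l)) (hjl : j = l) :
    ∑ t : Bool, sigF G (((x, j), (y, l)), t) ⊗ₖ tauF G (((x, j), (y, l)), t)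
      = r1 (wv (x, j) (y, l)) := by
  subst hjl
  have hs : ∀ t : Bool, sigF G (((x, j), (y, j)), t) = (2:ℂ)⁻¹ • r1 (eR x - eR y) := by
    intro t; unfold sigF; rw [if_pos hadj, if_pos rfl]
  have ht : ∀ t : Bool, tauF G (((x, j), (y, j)), t) = r1 (eR j) := by
    intro t; unfold tauF; rw [if_pos hadj, if_pos rfl]
  rw [Fintype.sum_bool, hs, ht, hs, ht, Matrix.smul_kronecker, r1_kron, wv_eq_mul₁]
  rw [← two_smul ℂ]
  rw [smul_smul]
  norm_num

/-- degenerate case x = y -/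
lemma Fsum_deg₂ {x y : α} {j l : β} (hadj : G.Adj (x, j) (y, l)) (hjl : ¬ j = l) (hxy : x = y) :
    ∑ t : Bool, sigF G (((x, j), (y, l)), t) ⊗ₖ tauF G (((x, j), (y, l)), t)
      = r1 (wv (x, j) (y, l)) := by
  subst hxy
  have hs : ∀ t : Bool, sigF G (((x, j), (x, l)), t) = r1 (eR x) := by
    intro t; unfold sigF; rw [if_pos hadj, if_neg hjl, if_pos rfl]
  have ht : ∀ t : Bool, tauF G (((x, j), (x, l)), t) = (2:ℂ)⁻¹ • r1 (eR j - eR l) := by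
    intro t; unfold tauF; rw [if_pos hadj, if_neg hjl, if_pos rfl]
  rw [Fintype.sum_bool, hs, ht, hs, ht, Matrix.kronecker_smul, r1_kron, wv_eq_mul₂]
  rw [← two_smul ℂ, smul_smul]
  norm_num

/-- entangled case -/
lemma Fsum_ent {x y : α} {j l : β} (hadj : G.Adj (x, j) (y, l)) (hjl : ¬ j = l) (hxy : ¬ x = y) :
    ∑ t : Bool, sigF G (((x, j), (y, l)), t) ⊗ₖ tauF G (((x, j), (y, l)), t)
      = (2:ℂ)⁻¹ • (r1 (wv (x, j) (y, l)) + r1 (wv (x, l) (y, j))) := by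
  have hs : ∀ t : Bool, sigF G (((x, j), (y, l)), t)
      = (2:ℂ)⁻¹ • r1 (eR x + bsgn t • eR y) := by
    intro t; unfold sigF; rw [if_pos hadj, if_neg hjl, if_neg hxy]
  have ht : ∀ t : Bool, tauF G (((x, j), (y, l)), t)
      = (2:ℂ)⁻¹ • r1 (eR j - bsgn t • eR l) := by
    intro t; unfold tauF; rw [if_pos hadj, if_neg hjl, if_neg hxy]
  rw [Fintype.sum_bool, hs, ht, hs, ht]
  rw [show bsgn true = 1 from rfl, show bsgn false = -1 from rfl, one_smul, one_smul,
    neg_one_smul, neg_one_smul]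
  rw [show (eR x + -eR y : α → ℝ) = eR x - eR y from (sub_eq_add_neg _ _).symm]
  rw [show (eR j - -eR l : β → ℝ) = eR j + eR l by rw [sub_neg_eq_add]]
  rw [Matrix.smul_kronecker, Matrix.kronecker_smul, Matrix.smul_kronecker,
    Matrix.kronecker_smul, smul_smul, smul_smul, ← smul_add]
  rw [polarization (eR x) (eR y) (eR j) (eR l)]
  rw [wv_cross, wv_cross]
  rw [smul_smul]
  norm_num

end Construction


section Key
variable {α β : Type*} [Fintype α] [Fintype β] [Nonempty α] [Nonempty β]
  [DecidableEq α] [DecidableEq β]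
  (G : SimpleGraph (α × β)) [DecidableRel G.Adj]

/-- the partial-transpose swap on ordered pairs -/
def psw (p : (α × β) × (α × β)) : (α × β) × (α × β) := ((p.1.1, p.2.2), (p.2.1, p.1.2))

lemma key_decomp (hAdj : ∀ (x y : α) (j l : β), G.Adj (x, j) (y, l) ↔ G.Adj (x, l) (y, j)) :
    G.lapMatrix ℂ = ∑ k : ((α × β) × (α × β)) × Bool,
      (if G.Adj k.1.1 k.1.2 then (2:ℂ)⁻¹ else 0) • (sigF G k ⊗ₖ tauF G k) := by
  rw [lap_decomp]
  conv_rhs => rw [Fintype.sum_prod_type]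
  have step : ∀ p : (α × β) × (α × β),
      ∑ t : Bool, (if G.Adj (p, t).1.1 (p, t).1.2 then (2:ℂ)⁻¹ else 0) •
          (sigF G (p, t) ⊗ₖ tauF G (p, t))
        = (if G.Adj p.1 p.2 then (2:ℂ)⁻¹ else 0) •
            ∑ t : Bool, (sigF G (p, t) ⊗ₖ tauF G (p, t)) := by
    intro p
    rw [Finset.smul_sum]
  rw [Finset.sum_congr rfl fun p _ => step p]
  -- now reduce to sum of differences being zero
  rw [eq_comm, ← sub_eq_zero, ← Finset.sum_sub_distrib]
  set f : (α × β) × (α × β) → Matrix ((α × β)) ((α × β)) ℂ := fun p =>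
    (if G.Adj p.1 p.2 then (2:ℂ)⁻¹ else 0) • (∑ t : Bool, (sigF G (p, t) ⊗ₖ tauF G (p, t)))
      - (if G.Adj p.1 p.2 then (2:ℂ)⁻¹ else 0) • r1 (wv p.1 p.2) with hf
  have hdeg : ∀ p : (α × β) × (α × β), (p.1.2 = p.2.2 ∨ p.1.1 = p.2.1) → f p = 0 := by
    rintro ⟨⟨x, j⟩, ⟨y, l⟩⟩ hp
    by_cases hadj : G.Adj (x, j) (y, l)
    · rcases hp with hp | hp
      · simp only [hf]
        rw [Fsum_deg₁ G hadj hp, sub_self]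
      · by_cases hjl : (j = l)
        · simp only [hf]; rw [Fsum_deg₁ G hadj hjl, sub_self]
        · simp only [hf]; rw [Fsum_deg₂ G hadj hjl hp, sub_self]
    · simp only [hf]
      rw [if_neg hadj, zero_smul, zero_smul, sub_self]
  have hnadj : ∀ p : (α × β) × (α × β), ¬ G.Adj p.1 p.2 → f p = 0 := by
    intro p hadj
    simp only [hf]
    rw [if_neg hadj, zero_smul, zero_smul, sub_self]
  refine Finset.sum_ninvolution psw ?_ ?_ (fun p => Finset.mem_univ _) ?_
  · rintro ⟨⟨x, j⟩, ⟨y, l⟩⟩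
    show f ((x, j), (y, l)) + f (psw ((x, j), (y, l))) = 0
    by_cases hadj : G.Adj (x, j) (y, l)
    · by_cases hjl : j = l
      · rw [hdeg _ (Or.inl hjl), hdeg _ (Or.inl (by exact hjl.symm ▸ rfl)), add_zero]
      · by_cases hxy : x = y
        · rw [hdeg _ (Or.inr hxy), hdeg _ (Or.inr hxy), add_zero]
        · -- entangled
          have hadj' : G.Adj (x, l) (y, j) := (hAdj x y j l).mp hadj
          have hlj : ¬ l = j := fun h => hjl h.symm
          simp only [hf, psw]
          rw [if_pos hadj, if_pos hadj']
          rw [Fsum_ent G hadj hjl hxy, Fsum_ent G hadj' hlj hxy]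
          module
    · have hadj' : ¬ G.Adj (x, l) (y, j) := fun h => hadj ((hAdj x y j l).mpr h)
      rw [hnadj _ hadj, hnadj _ hadj', add_zero]
  · rintro ⟨⟨x, j⟩, ⟨y, l⟩⟩ hne heq
    apply hne
    show f ((x, j), (y, l)) = 0
    have : j = l := congrArg (fun q => q.2.2) heq
    exact hdeg _ (Or.inl this)
  · rintro ⟨⟨x, j⟩, ⟨y, l⟩⟩
    rfl
end Key

end AuxSep

theorem partial_transpose_symmetric_state_separable
    {α β : Type*} [Fintype α] [Fintype β] [Nonempty α] [Nonempty β]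
    [DecidableEq α] [DecidableEq β]
    (G : SimpleGraph (α × β)) [DecidableRel G.Adj]
    (hE : G.edgeFinset.Nonempty)
    (hsym : ∀ (x y : α) (j l : β),
      lapState G (x, j) (y, l) = lapState G (x, l) (y, j)) :
    Separable (lapState G) := by
  classical
  have hE0 : 0 < G.edgeFinset.card := Finset.card_pos.mpr hE
  have hc : (2 * G.edgeFinset.card : ℂ) ≠ 0 := by
    have : (G.edgeFinset.card : ℂ) ≠ 0 := Nat.cast_ne_zero.mpr hE0.ne'
    exact mul_ne_zero two_ne_zero this
  -- Laplacian partial transpose symmetry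
  have hL : ∀ (x y : α) (j l : β),
      G.lapMatrix ℂ (x, j) (y, l) = G.lapMatrix ℂ (x, l) (y, j) := by
    intro x y j l
    have h := hsym x y j l
    unfold lapState at h
    simp only [Matrix.smul_apply, smul_eq_mul] at h
    exact mul_left_cancel₀ (inv_ne_zero hc) h
  -- adjacency symmetry
  have hAdj : ∀ (x y : α) (j l : β), G.Adj (x, j) (y, l) ↔ G.Adj (x, l) (y, j) := by
    intro x y j l
    by_cases hd : x = y ∧ j = l
    · obtain ⟨rfl, rfl⟩ := hd
      simp
    · have h1 : ((x, j) : α × β) ≠ (y, l) := by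
        intro h; exact hd ⟨congrArg Prod.fst h, congrArg Prod.snd h⟩
      have h2 : ((x, l) : α × β) ≠ (y, j) := by
        intro h
        have := congrArg Prod.fst h
        have h2 := congrArg Prod.snd h
        exact hd ⟨this, by simp at h2 ⊢; exact h2.symm ▸ rfl⟩
      have h := hL x y j l
      simp only [SimpleGraph.lapMatrix, SimpleGraph.degMatrix, Matrix.sub_apply,
        Matrix.diagonal_apply, SimpleGraph.adjMatrix_apply, if_neg h1, if_neg h2] at h
      by_cases ha1 : G.Adj (x, j) (y, l) <;> by_cases ha2 : G.Adj (x, l) (y, j) <;>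
        simp [ha1, ha2] at h ⊢
  -- the index set
  set K := ((α × β) × (α × β)) × Bool with hK
  let e : Fin (Fintype.card K) ≃ K := (Fintype.equivFin K).symm
  set w : ℝ := (2 * (2 * G.edgeFinset.card))⁻¹ with hw
  refine ⟨Fintype.card K, fun i => if G.Adj (e i).1.1 (e i).1.2 then w else 0,
    fun i => sigF G (e i), fun i => tauF G (e i), ?_, ?_, fun i => sigF_density G (e i),
    fun i => tauF_density G (e i), ?_⟩
  · intro i
    dsimp only
    split_ifs
    · rw [hw]; positivity
    · exact le_refl _
  · rw [Equiv.sum_comp e (fun k => if G.Adj k.1.1 k.1.2 then w else 0)]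
    rw [Fintype.sum_prod_type]
    have inner : ∀ p : (α × β) × (α × β),
        ∑ _t : Bool, (if G.Adj p.1 p.2 then w else 0)
          = 2 * (if G.Adj p.1 p.2 then w else 0) := by
      intro p; rw [Fintype.sum_bool]; ring
    rw [Finset.sum_congr rfl fun p _ => inner p, ← Finset.mul_sum]
    have hsum : ∑ p : (α × β) × (α × β), (if G.Adj p.1 p.2 then w else 0)
        = (2 * G.edgeFinset.card : ℝ) * w := by
      rw [Fintype.sum_prod_type]
      have hrow : ∀ a : α × β, ∑ b : α × β, (if G.Adj a b then w else 0)
          = (G.degree a : ℝ) * w := by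
        intro a
        rw [← Finset.sum_filter]
        rw [Finset.sum_const]
        rw [show Finset.filter (G.Adj a) Finset.univ = G.neighborFinset a from
          (SimpleGraph.neighborFinset_eq_filter G).symm]
        rw [SimpleGraph.card_neighborFinset_eq_degree]
        simp [nsmul_eq_mul]
      rw [Finset.sum_congr rfl fun a _ => hrow a, ← Finset.sum_mul]
      congr 1
      rw [← Nat.cast_sum]
      rw [SimpleGraph.sum_degrees_eq_twice_card_edges]
      push_cast
      ring
    rw [hsum, hw]
    have hpos : (0:ℝ) < (G.edgeFinset.card : ℝ) := by exact_mod_cast hE0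
    have h2 : (0:ℝ) < 2 * (2 * (G.edgeFinset.card : ℝ)) := by nlinarith
    rw [← mul_assoc]
    exact mul_inv_cancel₀ h2.ne'
  · rw [Equiv.sum_comp e (fun k => (((if G.Adj k.1.1 k.1.2 then w else 0 : ℝ)) : ℂ)
      • (sigF G k ⊗ₖ tauF G k))]
    unfold lapState
    rw [key_decomp G hAdj, Finset.smul_sum]
    refine Finset.sum_congr rfl fun k _ => ?_
    have hwc : ((w : ℝ) : ℂ) = (2 * (G.edgeFinset.card : ℂ))⁻¹ * 2⁻¹ := by
      rw [hw]
      push_cast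
      rw [mul_inv]
      ring
    by_cases h : G.Adj k.1.1 k.1.2
    · rw [if_pos h, if_pos h, smul_smul, hwc]
    · rw [if_neg h, if_neg h]
      simp
end
end

section
/- Let W be a finite type with decidable equality and let G be a simple graph on W × Fin 2 with at least one edge whose graph Laplacian state ρ_G satisfies ρ_G (u,a) (w,b) = ρ_G (u,b) (w,a) for all u, w : W and a, b : Fin 2 (i.e., ρ_G equals its partial transpose over the Fin 2 factor). Then ρ_G is separable (as a state on ℂ^W ⊗ ℂ²). -/
open Matrix Kronecker ComplexOrder

noncomputable section

/-! ### Auxiliary material -/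

set_option linter.unusedSectionVars false

namespace PTSep

/-- The standard basis vector as a function. -/
def bv {V : Type*} [DecidableEq V] (u : V) : V → ℂ := fun i => if u = i then 1 else 0

section Basic

variable {V : Type*} [Fintype V] [DecidableEq V]

@[simp] lemma bv_self (u : V) : bv u u = 1 := by simp [bv]
lemma bv_ne {u i : V} (h : u ≠ i) : bv u i = 0 := by simp [bv, h]

lemma psd_vmv (w : V → ℂ) (hw : star w = w) : (vecMulVec w w).PosSemidef := by
  have h : vecMulVec w w = (replicateRow Unit w)ᴴ * replicateRow Unit w := by
    ext i j
    have : (starRingEnd ℂ) (w i) = w i := congrFun hw i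
    simp [vecMulVec_apply, mul_apply, replicateRow, conjTranspose_apply, this]
  rw [h]
  exact posSemidef_conjTranspose_mul_self _

lemma psd_smul {n : Type*} [Fintype n] {M : Matrix n n ℂ} (hM : M.PosSemidef) {c : ℝ}
    (hc : 0 ≤ c) : ((c : ℂ) • M).PosSemidef := by
  constructor
  · unfold Matrix.IsHermitian
    rw [conjTranspose_smul, hM.1.eq]
    congr 1
    simp [Complex.star_def, Complex.conj_ofReal]
  · intro x
    exact (hM.smul (a := (c : ℂ)) (by exact_mod_cast Complex.zero_le_real.mpr hc)).2 x

lemma star_bv_sub (u x : V) : star (bv u - bv x) = bv u - bv x := by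
  funext i
  simp only [Pi.star_apply, Pi.sub_apply, bv, star_sub]
  split_ifs <;> simp

lemma star_bv_add (u x : V) : star (bv u + bv x) = bv u + bv x := by
  funext i
  simp only [Pi.star_apply, Pi.add_apply, bv, star_add]
  split_ifs <;> simp

lemma trace_vmv_sub (u x : V) :
    (vecMulVec (bv u - bv x) (bv u - bv x)).trace = if u = x then 0 else 2 := by
  by_cases h : u = x
  · simp [h, Matrix.trace, Matrix.diag, vecMulVec_apply]
  · simp only [Matrix.trace, Matrix.diag, vecMulVec_apply, Pi.sub_apply, bv, h, if_false]
    have : ∀ i : V, ((if u = i then (1:ℂ) else 0) - if x = i then 1 else 0) *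
        ((if u = i then 1 else 0) - if x = i then 1 else 0)
        = (if u = i then 1 else 0) + (if x = i then 1 else 0)
          - 2 * ((if u = i then 1 else 0) * if x = i then 1 else 0) := by
      intro i; split_ifs <;> ring
    rw [Finset.sum_congr rfl fun i _ => this i]
    simp [Finset.sum_sub_distrib, Finset.sum_add_distrib, Finset.mul_sum, ite_and, h,
      Finset.sum_ite_eq]
    norm_num

lemma trace_vmv_add (u x : V) :
    (vecMulVec (bv u + bv x) (bv u + bv x)).trace = if u = x then 4 else 2 := by
  by_cases h : u = x
  · subst h
    simp only [Matrix.trace, Matrix.diag, vecMulVec_apply, Pi.add_apply, bv, if_pos rfl]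
    have : ∀ i : V, ((if u = i then (1:ℂ) else 0) + if u = i then 1 else 0) *
        ((if u = i then 1 else 0) + if u = i then 1 else 0)
        = 4 * (if u = i then 1 else 0) := by intro i; split_ifs <;> ring
    rw [Finset.sum_congr rfl fun i _ => this i, ← Finset.mul_sum]
    simp [Finset.sum_ite_eq]
  · simp only [Matrix.trace, Matrix.diag, vecMulVec_apply, Pi.add_apply, bv, h, if_false]
    have : ∀ i : V, ((if u = i then (1:ℂ) else 0) + if x = i then 1 else 0) *
        ((if u = i then 1 else 0) + if x = i then 1 else 0)
        = (if u = i then 1 else 0) + (if x = i then 1 else 0)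
          + 2 * ((if u = i then 1 else 0) * if x = i then 1 else 0) := by
      intro i; split_ifs with h1 h2
      · exact absurd (h1.trans h2.symm) h
      · ring
      · ring
      · ring
    rw [Finset.sum_congr rfl fun i _ => this i]
    simp [Finset.sum_add_distrib, Finset.mul_sum, ite_and, h, Finset.sum_ite_eq]
    norm_num

lemma stepA (G : SimpleGraph V) [DecidableRel G.Adj] :
    (2 : ℂ) • G.lapMatrix ℂ =
      ∑ v, ∑ w, G.adjMatrix ℂ v w • vecMulVec (bv v - bv w) (bv v - bv w) := by
  have hrow : ∀ v : V, ∑ w, G.adjMatrix ℂ v w = (G.degree v : ℂ) := by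
    intro v
    simp [SimpleGraph.adjMatrix_apply, Finset.sum_boole, SimpleGraph.degree,
      SimpleGraph.neighborFinset_eq_filter]
  ext i j
  have expand : ∀ v w : V, G.adjMatrix ℂ v w * ((bv v i - bv w i) * (bv v j - bv w j))
      = G.adjMatrix ℂ v w * (bv v i * bv v j) - G.adjMatrix ℂ v w * (bv v i * bv w j)
        - G.adjMatrix ℂ v w * (bv w i * bv v j) + G.adjMatrix ℂ v w * (bv w i * bv w j) := by
    intro v w; ring
  simp only [Matrix.sum_apply, Matrix.smul_apply, vecMulVec_apply, Pi.sub_apply, smul_eq_mul]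
  simp only [expand, Finset.sum_add_distrib, Finset.sum_sub_distrib]
  have h1 : ∑ v, ∑ w, G.adjMatrix ℂ v w * (bv v i * bv v j)
      = (if i = j then (G.degree i : ℂ) else 0) := by
    rw [Finset.sum_eq_single i]
    · rw [← Finset.sum_mul, hrow]
      by_cases h : i = j <;> simp [h, bv_ne, mul_comm]
    · intro v _ hv
      simp [bv_ne hv]
    · simp
  have h2 : ∑ v, ∑ w, G.adjMatrix ℂ v w * (bv v i * bv w j) = G.adjMatrix ℂ i j := by
    rw [Finset.sum_eq_single i]
    · rw [Finset.sum_eq_single j] <;> intros <;> simp_all [bv_ne]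
    · intro v _ hv
      simp [bv_ne hv]
    · simp
  have h3 : ∑ v, ∑ w, G.adjMatrix ℂ v w * (bv w i * bv v j) = G.adjMatrix ℂ j i := by
    rw [Finset.sum_eq_single j]
    · rw [Finset.sum_eq_single i] <;> intros <;> simp_all [bv_ne]
    · intro v _ hv
      simp [bv_ne hv]
    · simp
  have h4 : ∑ v, ∑ w, G.adjMatrix ℂ v w * (bv w i * bv w j)
      = (if i = j then (G.degree i : ℂ) else 0) := by
    rw [Finset.sum_comm]
    rw [Finset.sum_eq_single i]
    · have hsA : ∀ v, G.adjMatrix ℂ v i = G.adjMatrix ℂ i v := by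
        intro v; simp [SimpleGraph.adjMatrix_apply, G.adj_comm]
      simp only [hsA]
      rw [← Finset.sum_mul, hrow]
      by_cases h : i = j <;> simp [h, bv_ne, mul_comm]
    · intro v _ hv
      simp [bv_ne hv]
    · simp
  rw [h1, h2, h3, h4]
  have hsymA : G.adjMatrix ℂ j i = G.adjMatrix ℂ i j := by
    simp [SimpleGraph.adjMatrix_apply, G.adj_comm]
  rw [hsymA]
  simp only [SimpleGraph.lapMatrix, Matrix.sub_apply, SimpleGraph.degMatrix,
    Matrix.diagonal_apply, SimpleGraph.adjMatrix_apply]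
  split_ifs <;> ring

lemma bv_prod {α β : Type*} [DecidableEq α] [DecidableEq β] (u : α) (a : β) (i : α) (c : β) :
    bv (u, a) (i, c) = bv u i * bv a c := by
  simp [bv, Prod.ext_iff, ite_and]; split_ifs <;> simp

lemma pairId {α β : Type*} [DecidableEq α] [DecidableEq β] (u x : α) (a b : β) :
    (2 : ℂ) • (vecMulVec (bv (u,a) - bv (x,b)) (bv (u,a) - bv (x,b))
      + vecMulVec (bv (u,b) - bv (x,a)) (bv (u,b) - bv (x,a)))
    = vecMulVec (bv u - bv x) (bv u - bv x) ⊗ₖ vecMulVec (bv a + bv b) (bv a + bv b)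
      + vecMulVec (bv u + bv x) (bv u + bv x) ⊗ₖ vecMulVec (bv a - bv b) (bv a - bv b) := by
  ext ⟨i, c⟩ ⟨j, d⟩
  simp only [Matrix.smul_apply, Matrix.add_apply, vecMulVec_apply, Pi.sub_apply, Pi.add_apply,
    kroneckerMap_apply, bv_prod, smul_eq_mul]
  ring

lemma unif_density {V : Type*} [Fintype V] [DecidableEq V] [Nonempty V] :
    (((Fintype.card V : ℂ))⁻¹ • (1 : Matrix V V ℂ)).PosSemidef ∧
      (((Fintype.card V : ℂ))⁻¹ • (1 : Matrix V V ℂ)).trace = 1 := by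
  have hcast : ((Fintype.card V : ℂ))⁻¹ = (((Fintype.card V : ℝ)⁻¹ : ℝ) : ℂ) := by
    push_cast; ring
  constructor
  · rw [hcast]
    exact psd_smul Matrix.PosSemidef.one (by positivity)
  · rw [Matrix.trace_smul, Matrix.trace_one, smul_eq_mul]
    exact inv_mul_cancel₀ (by exact_mod_cast Fintype.card_ne_zero)

end Basic

section Defs

variable {W : Type*} [Fintype W] [DecidableEq W]

/-- The `W`-factor vector of a decomposition term. -/
def vWf : W × W × Fin 2 × Fin 2 × Bool → (W → ℂ)
  | (u, x, _, _, s) => if s then bv u - bv x else bv u + bv x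

/-- The `Fin 2`-factor vector of a decomposition term. -/
def vFf : W × W × Fin 2 × Fin 2 × Bool → (Fin 2 → ℂ)
  | (_, _, a, b, s) => if s then bv a + bv b else bv a - bv b

/-- Trace of the `W`-factor. -/
def tpf : W × W × Fin 2 × Fin 2 × Bool → ℝ
  | (u, x, _, _, s) => if s then (if u = x then 0 else 2) else (if u = x then 4 else 2)

/-- Trace of the `Fin 2`-factor. -/
def tqf : W × W × Fin 2 × Fin 2 × Bool → ℝ
  | (_, _, a, b, s) => if s then (if a = b then 4 else 2) else (if a = b then 0 else 2)

/-- The normalized `W`-factor state. -/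
def sigf (t : W × W × Fin 2 × Fin 2 × Bool) : Matrix W W ℂ :=
  if tpf t = 0 then ((Fintype.card W : ℂ))⁻¹ • (1 : Matrix W W ℂ)
  else ((tpf t : ℝ) : ℂ)⁻¹ • vecMulVec (vWf t) (vWf t)

/-- The normalized `Fin 2`-factor state. -/
def tauf (t : W × W × Fin 2 × Fin 2 × Bool) : Matrix (Fin 2) (Fin 2) ℂ :=
  if tqf t = 0 then ((Fintype.card (Fin 2) : ℂ))⁻¹ • (1 : Matrix (Fin 2) (Fin 2) ℂ)
  else ((tqf t : ℝ) : ℂ)⁻¹ • vecMulVec (vFf t) (vFf t)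

/-- The weight of a decomposition term. -/
def wgtf (G : SimpleGraph (W × Fin 2)) [DecidableRel G.Adj] :
    W × W × Fin 2 × Fin 2 × Bool → ℝ
  | (u, x, a, b, _) => (if G.Adj (u, a) (x, b) then 1 else 0) / (16 * G.edgeFinset.card)

/-- The probability of a decomposition term. -/
def pf (G : SimpleGraph (W × Fin 2)) [DecidableRel G.Adj]
    (t : W × W × Fin 2 × Fin 2 × Bool) : ℝ :=
  wgtf G t * (tpf t * tqf t)

lemma tpf_nonneg (t : W × W × Fin 2 × Fin 2 × Bool) : 0 ≤ tpf t := by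
  rcases t with ⟨u, x, a, b, s⟩
  simp only [tpf]; split_ifs <;> norm_num

lemma tqf_nonneg (t : W × W × Fin 2 × Fin 2 × Bool) : 0 ≤ tqf t := by
  rcases t with ⟨u, x, a, b, s⟩
  simp only [tqf]; split_ifs <;> norm_num

lemma wgtf_nonneg (G : SimpleGraph (W × Fin 2)) [DecidableRel G.Adj]
    (t : W × W × Fin 2 × Fin 2 × Bool) : 0 ≤ wgtf G t := by
  rcases t with ⟨u, x, a, b, s⟩
  simp only [wgtf]
  split_ifs <;> positivity

lemma pf_nonneg (G : SimpleGraph (W × Fin 2)) [DecidableRel G.Adj]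
    (t : W × W × Fin 2 × Fin 2 × Bool) : 0 ≤ pf G t :=
  mul_nonneg (wgtf_nonneg G t) (mul_nonneg (tpf_nonneg t) (tqf_nonneg t))

lemma smul_sigf (t : W × W × Fin 2 × Fin 2 × Bool) :
    ((tpf t : ℝ) : ℂ) • sigf t = vecMulVec (vWf t) (vWf t) := by
  rcases t with ⟨u, x, a, b, s⟩
  by_cases h : tpf (u, x, a, b, s) = 0
  · have hs : s = true ∧ u = x := by
      cases s <;> simp only [tpf] at h <;> split_ifs at h <;> norm_num at h <;> simp_all
    obtain ⟨rfl, rfl⟩ := hs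
    have hv : vWf (u, u, a, b, true) = 0 := by
      simp [vWf]
    rw [h, hv]
    ext i j
    simp [vecMulVec_apply]
  · rw [sigf, if_neg h, smul_smul, mul_inv_cancel₀ (by exact_mod_cast h), one_smul]

lemma smul_tauf (t : W × W × Fin 2 × Fin 2 × Bool) :
    ((tqf t : ℝ) : ℂ) • tauf t = vecMulVec (vFf t) (vFf t) := by
  rcases t with ⟨u, x, a, b, s⟩
  by_cases h : tqf (u, x, a, b, s) = 0
  · have hs : s = false ∧ a = b := by
      cases s <;> simp only [tqf] at h <;> split_ifs at h <;> norm_num at h <;> simp_all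
    obtain ⟨rfl, rfl⟩ := hs
    have hv : vFf (u, x, a, a, false) = (0 : Fin 2 → ℂ) := by
      simp [vFf]
    rw [h, hv]
    ext i j
    simp [vecMulVec_apply]
  · rw [tauf, if_neg h, smul_smul, mul_inv_cancel₀ (by exact_mod_cast h), one_smul]

lemma sigf_density [Nonempty W] (t : W × W × Fin 2 × Fin 2 × Bool) :
    (sigf t).PosSemidef ∧ (sigf t).trace = 1 := by
  rcases t with ⟨u, x, a, b, s⟩
  by_cases h : tpf (u, x, a, b, s) = 0
  · rw [sigf, if_pos h]
    exact unif_density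
  · rw [sigf, if_neg h]
    have hstar : star (vWf (u, x, a, b, s)) = vWf (u, x, a, b, s) := by
      cases s <;> simp only [vWf, if_true, if_false, Bool.false_eq_true] <;>
        first | exact star_bv_add u x | exact star_bv_sub u x
    have htr : (vecMulVec (vWf (u, x, a, b, s)) (vWf (u, x, a, b, s))).trace
        = ((tpf (u, x, a, b, s) : ℝ) : ℂ) := by
      cases s <;> simp only [vWf, tpf, if_true, if_false, Bool.false_eq_true] <;>
        [skip; skip] <;> first
        | (rw [trace_vmv_add]; by_cases hux : u = x <;> simp [hux])
        | (rw [trace_vmv_sub]; by_cases hux : u = x <;> simp [hux])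
    constructor
    · have hcast : ((tpf (u, x, a, b, s) : ℝ) : ℂ)⁻¹
          = (((tpf (u, x, a, b, s))⁻¹ : ℝ) : ℂ) := by push_cast; ring
      rw [hcast]
      exact psd_smul (psd_vmv _ hstar) (inv_nonneg.mpr (tpf_nonneg _))
    · rw [Matrix.trace_smul, htr, smul_eq_mul]
      exact inv_mul_cancel₀ (by exact_mod_cast h)

lemma tauf_density (t : W × W × Fin 2 × Fin 2 × Bool) :
    (tauf t).PosSemidef ∧ (tauf t).trace = 1 := by
  rcases t with ⟨u, x, a, b, s⟩
  by_cases h : tqf (u, x, a, b, s) = 0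
  · rw [tauf, if_pos h]
    exact unif_density
  · rw [tauf, if_neg h]
    have hstar : star (vFf (u, x, a, b, s)) = vFf (u, x, a, b, s) := by
      cases s <;> simp only [vFf, if_true, if_false, Bool.false_eq_true] <;>
        first | exact star_bv_add a b | exact star_bv_sub a b
    have htr : (vecMulVec (vFf (u, x, a, b, s)) (vFf (u, x, a, b, s))).trace
        = ((tqf (u, x, a, b, s) : ℝ) : ℂ) := by
      cases s <;> simp only [vFf, tqf, if_true, if_false, Bool.false_eq_true] <;> first
        | (rw [trace_vmv_add]; by_cases hab : a = b <;> simp [hab])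
        | (rw [trace_vmv_sub]; by_cases hab : a = b <;> simp [hab])
    constructor
    · have hcast : ((tqf (u, x, a, b, s) : ℝ) : ℂ)⁻¹
          = (((tqf (u, x, a, b, s))⁻¹ : ℝ) : ℂ) := by push_cast; ring
      rw [hcast]
      exact psd_smul (psd_vmv _ hstar) (inv_nonneg.mpr (tqf_nonneg _))
    · rw [Matrix.trace_smul, htr, smul_eq_mul]
      exact inv_mul_cancel₀ (by exact_mod_cast h)

end Defs

end PTSep

open PTSep in
set_option maxHeartbeats 1000000 in
theorem partial_transpose_symmetric_qubit_state_separable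
    {W : Type*} [Fintype W] [DecidableEq W] [Nonempty W]
    (G : SimpleGraph (W × Fin 2)) [DecidableRel G.Adj]
    (hE : G.edgeFinset.Nonempty)
    (hsym : ∀ (u w : W) (a b : Fin 2),
      lapState G (u, a) (w, b) = lapState G (u, b) (w, a)) :
    Separable (lapState G) := by
  classical
  have hm0 : 0 < G.edgeFinset.card := Finset.card_pos.mpr hE
  have hc : (2 * (G.edgeFinset.card : ℂ)) ≠ 0 :=
    mul_ne_zero two_ne_zero (Nat.cast_ne_zero.mpr hm0.ne')
  -- entrywise symmetry of the Laplacian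
  have hL : ∀ (u w : W) (a b : Fin 2),
      G.lapMatrix ℂ (u, a) (w, b) = G.lapMatrix ℂ (u, b) (w, a) := by
    intro u w a b
    have h := hsym u w a b
    simp only [lapState, Matrix.smul_apply, smul_eq_mul] at h
    exact mul_left_cancel₀ (inv_ne_zero hc) h
  -- entrywise partial symmetry of the adjacency matrix
  have hA : ∀ (u x : W) (a b : Fin 2),
      G.adjMatrix ℂ (u, a) (x, b) = G.adjMatrix ℂ (u, b) (x, a) := by
    intro u x a b
    by_cases h : u = x ∧ a = b
    · obtain ⟨rfl, rfl⟩ := h; rfl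
    · have h1 : (u, a) ≠ (x, b) := by
        intro he; exact h ⟨congrArg Prod.fst he, congrArg Prod.snd he⟩
      have h2 : (u, b) ≠ (x, a) := by
        intro he; exact h ⟨congrArg Prod.fst he, (congrArg Prod.snd he).symm⟩
      have e1 : G.lapMatrix ℂ (u, a) (x, b) = - G.adjMatrix ℂ (u, a) (x, b) := by
        simp [SimpleGraph.lapMatrix, SimpleGraph.degMatrix, Matrix.diagonal_apply_ne _ h1]
      have e2 : G.lapMatrix ℂ (u, b) (x, a) = - G.adjMatrix ℂ (u, b) (x, a) := by
        simp [SimpleGraph.lapMatrix, SimpleGraph.degMatrix, Matrix.diagonal_apply_ne _ h2]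
      have := hL u x a b
      rw [e1, e2] at this
      exact neg_injective this
  -- Step 1 : 2L as a sum over ordered pairs, with indices split
  have T1 : (2 : ℂ) • G.lapMatrix ℂ = ∑ u : W, ∑ x : W, ∑ a : Fin 2, ∑ b : Fin 2,
      G.adjMatrix ℂ (u, a) (x, b) •
        vecMulVec (bv (u,a) - bv (x,b)) (bv (u,a) - bv (x,b)) := by
    rw [stepA G]
    simp only [Fintype.sum_prod_type]
    exact Finset.sum_congr rfl fun u _ => Finset.sum_comm
  -- Step 2 : same with the Fin 2 labels swapped
  have T2 : (2 : ℂ) • G.lapMatrix ℂ = ∑ u : W, ∑ x : W, ∑ a : Fin 2, ∑ b : Fin 2,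
      G.adjMatrix ℂ (u, a) (x, b) •
        vecMulVec (bv (u,b) - bv (x,a)) (bv (u,b) - bv (x,a)) := by
    rw [T1]
    refine Finset.sum_congr rfl fun u _ => Finset.sum_congr rfl fun x _ => ?_
    rw [Finset.sum_comm]
    refine Finset.sum_congr rfl fun a _ => Finset.sum_congr rfl fun b _ => ?_
    rw [hA u x b a]
  -- Step 3 : 8L as a sum of separable pieces
  have key8 : (8 : ℂ) • G.lapMatrix ℂ = ∑ u : W, ∑ x : W, ∑ a : Fin 2, ∑ b : Fin 2,
      G.adjMatrix ℂ (u, a) (x, b) •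
        (vecMulVec (bv u - bv x) (bv u - bv x) ⊗ₖ vecMulVec (bv a + bv b) (bv a + bv b)
          + vecMulVec (bv u + bv x) (bv u + bv x) ⊗ₖ vecMulVec (bv a - bv b) (bv a - bv b)) := by
    have h4 : (4 : ℂ) • G.lapMatrix ℂ = ∑ u : W, ∑ x : W, ∑ a : Fin 2, ∑ b : Fin 2,
        G.adjMatrix ℂ (u, a) (x, b) •
          (vecMulVec (bv (u,a) - bv (x,b)) (bv (u,a) - bv (x,b))
            + vecMulVec (bv (u,b) - bv (x,a)) (bv (u,b) - bv (x,a))) := by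
      have h44 : (4 : ℂ) • G.lapMatrix ℂ
          = (2 : ℂ) • G.lapMatrix ℂ + (2 : ℂ) • G.lapMatrix ℂ := by
        rw [← add_smul]; norm_num
      rw [h44]
      nth_rewrite 1 [T1]
      nth_rewrite 1 [T2]
      simp only [← Finset.sum_add_distrib, ← smul_add]
    have h8 : (8 : ℂ) • G.lapMatrix ℂ = (2 : ℂ) • ((4 : ℂ) • G.lapMatrix ℂ) := by
      rw [smul_smul]; norm_num
    rw [h8, h4]
    simp only [Finset.smul_sum]
    refine Finset.sum_congr rfl fun u _ => Finset.sum_congr rfl fun x _ =>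
      Finset.sum_congr rfl fun a _ => Finset.sum_congr rfl fun b _ => ?_
    rw [smul_comm, pairId]
  -- the main decomposition with normalized coefficients
  have hmain : lapState G = ∑ t : W × W × Fin 2 × Fin 2 × Bool,
      ((pf G t : ℝ) : ℂ) • (sigf t ⊗ₖ tauf t) := by
    have term_eq : ∀ (t : W × W × Fin 2 × Fin 2 × Bool),
        ((pf G t : ℝ) : ℂ) • (sigf t ⊗ₖ tauf t)
          = ((wgtf G t : ℝ) : ℂ) • (vecMulVec (vWf t) (vWf t) ⊗ₖ vecMulVec (vFf t) (vFf t)) := by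
      intro t
      calc ((pf G t : ℝ) : ℂ) • (sigf t ⊗ₖ tauf t)
          = ((wgtf G t : ℝ) : ℂ) •
              ((((tpf t : ℝ) : ℂ) • sigf t) ⊗ₖ (((tqf t : ℝ) : ℂ) • tauf t)) := by
            rw [smul_kronecker, kronecker_smul, smul_smul, smul_smul]
            congr 1
            push_cast [pf]
            ring
        _ = _ := by rw [smul_sigf, smul_tauf]
    rw [Fintype.sum_congr _ _ term_eq]
    have hsplit : ∑ t : W × W × Fin 2 × Fin 2 × Bool,
        ((wgtf G t : ℝ) : ℂ) • (vecMulVec (vWf t) (vWf t) ⊗ₖ vecMulVec (vFf t) (vFf t))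
        = ∑ u : W, ∑ x : W, ∑ a : Fin 2, ∑ b : Fin 2,
            (((wgtf G (u,x,a,b,true) : ℝ) : ℂ) •
              (vecMulVec (bv u - bv x) (bv u - bv x) ⊗ₖ vecMulVec (bv a + bv b) (bv a + bv b))
            + ((wgtf G (u,x,a,b,false) : ℝ) : ℂ) •
              (vecMulVec (bv u + bv x) (bv u + bv x) ⊗ₖ vecMulVec (bv a - bv b) (bv a - bv b))) := by
      rw [Fintype.sum_prod_type]
      refine Finset.sum_congr rfl fun u _ => ?_
      rw [Fintype.sum_prod_type]
      refine Finset.sum_congr rfl fun x _ => ?_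
      rw [Fintype.sum_prod_type]
      refine Finset.sum_congr rfl fun a _ => ?_
      rw [Fintype.sum_prod_type]
      refine Finset.sum_congr rfl fun b _ => ?_
      rw [Fintype.sum_bool]
      rfl
    rw [hsplit]
    have hlap : lapState G = ((2 * (G.edgeFinset.card : ℂ)))⁻¹ • ((8:ℂ)⁻¹ • ((8 : ℂ) • G.lapMatrix ℂ)) := by
      rw [smul_smul, smul_smul, lapState]
      congr 1
      ring
    rw [hlap, key8]
    simp only [Finset.smul_sum]
    refine Finset.sum_congr rfl fun u _ => Finset.sum_congr rfl fun x _ =>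
      Finset.sum_congr rfl fun a _ => Finset.sum_congr rfl fun b _ => ?_
    have hw : ∀ s : Bool, ((wgtf G (u,x,a,b,s) : ℝ) : ℂ)
        = (2 * (G.edgeFinset.card : ℂ))⁻¹ * ((8:ℂ)⁻¹ * G.adjMatrix ℂ (u,a) (x,b)) := by
      intro s
      simp only [wgtf, SimpleGraph.adjMatrix_apply]
      by_cases hadj : G.Adj (u,a) (x,b)
      · simp only [hadj, if_true]
        have h16 : ((16 : ℝ) * (G.edgeFinset.card : ℝ)) ≠ 0 := by positivity
        push_cast
        rw [div_eq_iff (by exact_mod_cast h16)]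
        have h28 : (2 * (G.edgeFinset.card : ℂ) * 8) ≠ 0 := mul_ne_zero hc (by norm_num)
        rw [mul_one, ← mul_inv,
          show (16 : ℂ) * (G.edgeFinset.card : ℂ) = 2 * (G.edgeFinset.card : ℂ) * 8 by ring]
        exact (inv_mul_cancel₀ h28).symm
      · simp [hadj]
    rw [hw true, hw false, ← smul_add, smul_smul, smul_smul, mul_assoc]
  -- trace of the state is 1
  have htrace : (lapState G).trace = 1 := by
    have hlt : (G.lapMatrix ℂ).trace = 2 * (G.edgeFinset.card : ℂ) := by
      have hdeg : (∑ v, (G.degree v : ℂ)) = 2 * (G.edgeFinset.card : ℂ) := by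
        rw [← Nat.cast_sum]
        rw [SimpleGraph.sum_degrees_eq_twice_card_edges]
        push_cast
        ring
      simp [SimpleGraph.lapMatrix, Matrix.trace_sub, SimpleGraph.degMatrix,
        Matrix.trace_diagonal, hdeg]
    rw [lapState, Matrix.trace_smul, hlt, smul_eq_mul, inv_mul_cancel₀ hc]
  -- the sum of probabilities is 1
  have hsum : ∑ t : W × W × Fin 2 × Fin 2 × Bool, pf G t = 1 := by
    have h1 : (lapState G).trace
        = ∑ t : W × W × Fin 2 × Fin 2 × Bool, ((pf G t : ℝ) : ℂ) := by
      rw [hmain, Matrix.trace_sum]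
      refine Finset.sum_congr rfl fun t _ => ?_
      rw [Matrix.trace_smul, Matrix.trace_kronecker, (sigf_density t).2, (tauf_density t).2,
        smul_eq_mul, mul_one, mul_one]
    rw [htrace] at h1
    have := h1.symm
    rw [← Complex.ofReal_sum] at this
    exact_mod_cast this
  -- assemble the separability witness
  set I := W × W × Fin 2 × Fin 2 × Bool with hI
  set e := (Fintype.equivFin I).symm with he
  refine ⟨Fintype.card I, fun k => pf G (e k), fun k => sigf (e k), fun k => tauf (e k),
    fun k => pf_nonneg G (e k), ?_, fun k => sigf_density (e k), fun k => tauf_density (e k), ?_⟩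
  · rw [Equiv.sum_comp e (pf G)]
    exact hsum
  · rw [Equiv.sum_comp e (fun t => ((pf G t : ℝ) : ℂ) • (sigf t ⊗ₖ tauf t))]
    exact hmain
end
end

section
/- Let W be a finite type with decidable equality and let G be a simple graph on W × Fin 2 with at least one edge such that for all w, w' : W, if G.Adj (w,0) (w',1) then G.Adj (w,1) (w',0) (i.e., whenever an edge joins a vertex with odd second label to a vertex with even second label, the edge obtained by shifting the odd label up by one and the even label down by one is also present). Then the graph Laplacian state ρ_G is separable (as a state on ℂ^W ⊗ ℂ²). -/
open Matrix Kronecker ComplexOrder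

noncomputable section

namespace SepAux

set_option linter.unusedSectionVars false
set_option maxHeartbeats 1000000

/-! ### Generalities on positive semidefinite complex matrices -/

/-- Outer product of a real vector, as a complex matrix. -/
def rOuter {α : Type*} (v : α → ℝ) : Matrix α α ℂ := Matrix.of fun i j => (v i : ℂ) * (v j : ℂ)

/-- Indicator vector of a point. -/
def dirac {α : Type*} [DecidableEq α] (w : α) : α → ℝ := fun a => if a = w then 1 else 0

variable {α : Type*} [Fintype α] [DecidableEq α]

lemma rOuter_posSemidef (v : α → ℝ) : (rOuter v).PosSemidef := by
  refine Matrix.PosSemidef.of_dotProduct_mulVec_nonneg ?_ ?_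
  · ext i j
    simp [Matrix.conjTranspose_apply, rOuter, Complex.conj_ofReal, mul_comm]
  · intro x
    have h : star x ⬝ᵥ (rOuter v *ᵥ x) = star (∑ j, (v j : ℂ) * x j) * (∑ j, (v j : ℂ) * x j) := by
      simp only [dotProduct, mulVec, rOuter, Matrix.of_apply, Pi.star_apply, star_sum, star_mul',
        Complex.conj_ofReal, Finset.sum_mul, Finset.mul_sum]
      rw [Finset.sum_comm]
      refine Finset.sum_congr rfl fun i _ => Finset.sum_congr rfl fun j _ => by
        simp only [RCLike.star_def, Complex.conj_ofReal]; ring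
    rw [h]
    exact star_mul_self_nonneg _

lemma posSemidef_real_smul {c : ℝ} (hc : 0 ≤ c) {A : Matrix α α ℂ} (hA : A.PosSemidef) :
    ((c : ℂ) • A).PosSemidef := by
  refine Matrix.PosSemidef.of_dotProduct_mulVec_nonneg ?_ ?_
  · have h1 : star (c : ℂ) = (c : ℂ) := by
      simp [RCLike.star_def, Complex.conj_ofReal]
    unfold Matrix.IsHermitian
    rw [Matrix.conjTranspose_smul, hA.1, h1]
  · intro x
    rw [Matrix.smul_mulVec, dotProduct_smul, smul_eq_mul]
    exact mul_nonneg (by exact_mod_cast hc) (hA.dotProduct_mulVec_nonneg x)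

lemma psd_diag_nonneg {A : Matrix α α ℂ} (hA : A.PosSemidef) (i : α) : 0 ≤ A i i := by
  have h := hA.dotProduct_mulVec_nonneg (Pi.single i 1)
  simpa [Matrix.mulVec_single, dotProduct, Pi.single_apply, apply_ite, Finset.sum_ite_eq] using h

lemma psd_trace_nonneg {A : Matrix α α ℂ} (hA : A.PosSemidef) : 0 ≤ A.trace :=
  Finset.sum_nonneg fun i _ => psd_diag_nonneg hA i

lemma psd_trace_real {A : Matrix α α ℂ} (hA : A.PosSemidef) :
    A.trace = ((A.trace.re : ℝ) : ℂ) := by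
  have h := psd_trace_nonneg hA
  rw [Complex.nonneg_iff] at h
  exact Complex.ext (by simp) (by simp [← h.2])

lemma psd_trace_re_nonneg {A : Matrix α α ℂ} (hA : A.PosSemidef) : 0 ≤ A.trace.re :=
  ((Complex.nonneg_iff).mp (psd_trace_nonneg hA)).1

lemma psd_of_trace_zero {A : Matrix α α ℂ} (hA : A.PosSemidef) (h : A.trace = 0) : A = 0 := by
  obtain ⟨B, rfl⟩ : ∃ B : Matrix α α ℂ, A = Bᴴ * B := by
    open scoped MatrixOrder Matrix.Norms.L2Operator in
    exact CStarAlgebra.nonneg_iff_eq_star_mul_self.mp hA.nonneg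
  have htr : (Bᴴ * B).trace = ∑ j, ∑ i, star (B i j) * B i j := by
    simp [Matrix.trace, Matrix.mul_apply, Matrix.diag, Matrix.conjTranspose_apply]
  rw [htr] at h
  have hB : B = 0 := by
    ext i j
    have h2 := (Finset.sum_eq_zero_iff_of_nonneg
      (fun j _ => Finset.sum_nonneg fun i _ => star_mul_self_nonneg (B i j))).mp h j
      (Finset.mem_univ _)
    have h3 := (Finset.sum_eq_zero_iff_of_nonneg
      (fun i _ => star_mul_self_nonneg (B i j))).mp h2 i (Finset.mem_univ _)
    rcases mul_eq_zero.mp h3 with h4 | h4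
    · simpa using star_eq_zero.mp h4
    · simpa using h4
  rw [hB]
  simp

/-! ### The abstract separability criterion -/

lemma density_dflt (α : Type*) [Fintype α] [DecidableEq α] [Nonempty α] :
    ((((Fintype.card α : ℝ)⁻¹ : ℝ) : ℂ) • (1 : Matrix α α ℂ)).PosSemidef ∧
      ((((Fintype.card α : ℝ)⁻¹ : ℝ) : ℂ) • (1 : Matrix α α ℂ)).trace = 1 := by
  have hc : ((Fintype.card α : ℝ) : ℂ) ≠ 0 := by
    simp [Fintype.card_ne_zero]
  constructor
  · exact posSemidef_real_smul (by positivity) Matrix.PosSemidef.one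
  · rw [Matrix.trace_smul, Matrix.trace_one, smul_eq_mul, Complex.ofReal_inv,
      show ((Fintype.card α : ℕ) : ℂ) = ((Fintype.card α : ℝ) : ℂ) by push_cast; ring]
    exact inv_mul_cancel₀ hc

lemma separable_of_decomp {α β : Type*} [Fintype α] [Fintype β] [DecidableEq α] [DecidableEq β]
    [Nonempty α] [Nonempty β]
    {ρ : Matrix (α × β) (α × β) ℂ} (hρtr : ρ.trace = 1)
    {K : Type*} [Fintype K] (M : K → Matrix α α ℂ) (N : K → Matrix β β ℂ)
    (hM : ∀ k, (M k).PosSemidef) (hN : ∀ k, (N k).PosSemidef)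
    (hsum : ρ = ∑ k, M k ⊗ₖ N k) : Separable ρ := by
  classical
  obtain ⟨e⟩ : Nonempty (Fin (Fintype.card K) ≃ K) := ⟨(Fintype.equivFin K).symm⟩
  set p : K → ℝ := fun k => (M k).trace.re * (N k).trace.re with hp
  set σ : K → Matrix α α ℂ := fun k =>
    if (M k).trace = 0 then (((Fintype.card α : ℝ)⁻¹ : ℝ) : ℂ) • 1
    else ((M k).trace)⁻¹ • M k with hσ
  set τ : K → Matrix β β ℂ := fun k =>
    if (N k).trace = 0 then (((Fintype.card β : ℝ)⁻¹ : ℝ) : ℂ) • 1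
    else ((N k).trace)⁻¹ • N k with hτ
  refine ⟨Fintype.card K, fun i => p (e i), fun i => σ (e i), fun i => τ (e i), ?_, ?_, ?_, ?_, ?_⟩
  · intro i; exact mul_nonneg (psd_trace_re_nonneg (hM _)) (psd_trace_re_nonneg (hN _))
  · rw [Equiv.sum_comp e p]
    have h1 : ((∑ k, p k : ℝ) : ℂ) = 1 := by
      push_cast
      have h2 : ∀ k, ((p k : ℝ) : ℂ) = (M k ⊗ₖ N k).trace := by
        intro k
        rw [Matrix.trace_kronecker, hp]
        push_cast
        rw [← psd_trace_real (hM k), ← psd_trace_real (hN k)]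
      rw [Finset.sum_congr rfl fun k _ => h2 k, ← Matrix.trace_sum, ← hsum, hρtr]
    exact_mod_cast h1
  · intro i
    by_cases h : (M (e i)).trace = 0
    · simp only [hσ, if_pos h]; exact density_dflt α
    · constructor
      · simp only [hσ, if_neg h]
        rw [psd_trace_real (hM (e i)), ← Complex.ofReal_inv]
        exact posSemidef_real_smul (inv_nonneg.mpr (psd_trace_re_nonneg (hM _))) (hM _)
      · simp only [hσ, if_neg h]
        rw [Matrix.trace_smul, smul_eq_mul, inv_mul_cancel₀ h]
  · intro i
    by_cases h : (N (e i)).trace = 0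
    · simp only [hτ, if_pos h]; exact density_dflt β
    · constructor
      · simp only [hτ, if_neg h]
        rw [psd_trace_real (hN (e i)), ← Complex.ofReal_inv]
        exact posSemidef_real_smul (inv_nonneg.mpr (psd_trace_re_nonneg (hN _))) (hN _)
      · simp only [hτ, if_neg h]
        rw [Matrix.trace_smul, smul_eq_mul, inv_mul_cancel₀ h]
  · rw [hsum, ← Equiv.sum_comp e (fun k => M k ⊗ₖ N k)]
    refine Finset.sum_congr rfl fun i _ => ?_
    by_cases hm : (M (e i)).trace = 0
    · have h0 : M (e i) = 0 := psd_of_trace_zero (hM _) hm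
      have hre : (M (e i)).trace.re = 0 := by rw [hm]; simp
      simp [hp, h0, hre]
    · by_cases hn : (N (e i)).trace = 0
      · have h0 : N (e i) = 0 := psd_of_trace_zero (hN _) hn
        have hre : (N (e i)).trace.re = 0 := by rw [hn]; simp
        simp [hp, h0, hre]
      · simp only [hσ, hτ, if_neg hm, if_neg hn]
        rw [Matrix.smul_kronecker, Matrix.kronecker_smul, smul_smul, smul_smul]
        have hscal : ((p (e i) : ℝ) : ℂ) * (M (e i)).trace⁻¹ * (N (e i)).trace⁻¹ = 1 := by
          rw [hp, mul_assoc]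
          push_cast
          rw [← psd_trace_real (hM _), ← psd_trace_real (hN _)]
          field_simp
        rw [hscal, one_smul]

/-! ### The Laplacian as a sum of rank-one outer products -/

lemma lap_eq_sum {V : Type*} [Fintype V] [DecidableEq V] (G : SimpleGraph V)
    [DecidableRel G.Adj] :
    G.lapMatrix ℂ = ∑ x : V × V,
      (if G.Adj x.1 x.2 then (2:ℂ)⁻¹ • rOuter (dirac x.1 - dirac x.2) else 0) := by
  ext u v
  rw [Matrix.sum_apply]
  set D : V → V → ℂ := fun u p => if u = p then 1 else 0 with hD
  set A : V → V → ℂ := fun p q => if G.Adj p q then 1 else 0 with hA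
  have hterm : ∀ x : V × V,
      (if G.Adj x.1 x.2 then (2:ℂ)⁻¹ • rOuter (dirac x.1 - dirac x.2) else 0) u v
        = (2:ℂ)⁻¹ * (A x.1 x.2 * ((D u x.1 - D u x.2) * (D v x.1 - D v x.2))) := by
    rintro ⟨p, q⟩
    by_cases h : G.Adj p q
    · simp only [if_pos h, hA, Matrix.smul_apply, rOuter, Matrix.of_apply, Pi.sub_apply, dirac,
        hD, smul_eq_mul]
      push_cast
      simp only [apply_ite (fun (r:ℝ) => (r : ℂ)), Complex.ofReal_one, Complex.ofReal_zero]
      ring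
    · simp [if_neg h, hA, h]
  rw [Finset.sum_congr rfl fun x _ => hterm x, ← Finset.mul_sum, Fintype.sum_prod_type]
  have hdeg : ∀ p, ∑ q, A p q = (G.degree p : ℂ) := by
    intro p
    rw [SimpleGraph.degree_eq_sum_if_adj]
  have inner : ∀ p, ∑ q, A p q * ((D u p - D u q) * (D v p - D v q))
      = (G.degree p : ℂ) * (D u p * D v p) - D u p * A p v - D v p * A p u + A p u * D v u := by
    intro p
    have expand : ∀ q, A p q * ((D u p - D u q) * (D v p - D v q))
        = A p q * (D u p * D v p) - A p q * (D u p * D v q)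
          - A p q * (D u q * D v p) + A p q * (D u q * D v q) := by intro q; ring
    rw [Finset.sum_congr rfl fun q _ => expand q]
    rw [Finset.sum_add_distrib, Finset.sum_sub_distrib, Finset.sum_sub_distrib,
      ← Finset.sum_mul, hdeg p]
    have h2 : ∑ q, A p q * (D u p * D v q)
        = ∑ q, (if v = q then A p q * D u p else 0) := by
      refine Finset.sum_congr rfl fun q _ => ?_
      by_cases hq : v = q <;> simp [hD, hq] <;> ring
    have h3 : ∑ q, A p q * (D u q * D v p)
        = ∑ q, (if u = q then A p q * D v p else 0) := by
      refine Finset.sum_congr rfl fun q _ => ?_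
      by_cases hq : u = q <;> simp [hD, hq] <;> ring
    have h4 : ∑ q, A p q * (D u q * D v q)
        = ∑ q, (if u = q then A p q * D v q else 0) := by
      refine Finset.sum_congr rfl fun q _ => ?_
      by_cases hq : u = q <;> simp [hD, hq] <;> ring
    rw [h2, h3, h4, Finset.sum_ite_eq, Finset.sum_ite_eq, Finset.sum_ite_eq]
    simp only [Finset.mem_univ, if_true]
    ring
  rw [Finset.sum_congr rfl fun p _ => inner p]
  rw [Finset.sum_add_distrib, Finset.sum_sub_distrib, Finset.sum_sub_distrib]
  have k1 : ∑ p, (G.degree p : ℂ) * (D u p * D v p)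
      = ∑ p, (if u = p then (G.degree p : ℂ) * D v p else 0) := by
    refine Finset.sum_congr rfl fun p _ => ?_
    by_cases hp : u = p <;> simp [hD, hp] <;> ring
  have k2 : ∑ p, D u p * A p v = ∑ p, (if u = p then A p v else 0) := by
    refine Finset.sum_congr rfl fun p _ => ?_
    by_cases hp : u = p <;> simp [hD, hp]
  have k3 : ∑ p, D v p * A p u = ∑ p, (if v = p then A p u else 0) := by
    refine Finset.sum_congr rfl fun p _ => ?_
    by_cases hp : v = p <;> simp [hD, hp]
  have k4 : ∑ p, A p u * D v u = (∑ p, A u p) * D v u := by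
    rw [Finset.sum_mul]
    refine Finset.sum_congr rfl fun p _ => ?_
    simp only [hA]
    exact congrArg (· * D v u) (if_congr (G.adj_comm p u) rfl rfl)
  rw [k1, k2, k3, k4]
  simp only [Finset.sum_ite_eq, Finset.mem_univ, if_true]
  rw [hdeg u]
  have hAsymm : A v u = A u v := by
    simp only [hA]; exact if_congr (G.adj_comm v u) rfl rfl
  simp only [SimpleGraph.lapMatrix, Matrix.sub_apply, SimpleGraph.degMatrix,
    Matrix.diagonal_apply, SimpleGraph.adjMatrix_apply, hAsymm, hD]
  by_cases huv : u = v
  · subst huv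
    simp only [if_pos rfl, hA, if_true, eq_self_iff_true]
    ring
  · rw [if_neg huv, if_neg (show ¬ v = u from fun h => huv h.symm)]
    simp only [hA]
    ring

/-! ### Kronecker product identities -/

def Qm : Matrix (Fin 2) (Fin 2) ℂ := rOuter (fun k => if k = 0 then 1 else -1)
def Qp : Matrix (Fin 2) (Fin 2) ℂ := rOuter (fun _ => 1)

variable {W : Type*} [Fintype W] [DecidableEq W]

lemma kron_same (w w' : W) (i : Fin 2) :
    rOuter (dirac ((w, i) : W × Fin 2) - dirac (w', i))
      = rOuter (dirac w - dirac w') ⊗ₖ rOuter (dirac i) := by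
  ext ⟨a, k⟩ ⟨b, l⟩
  simp only [rOuter, Matrix.of_apply, Pi.sub_apply, dirac, Matrix.kroneckerMap_apply,
    Prod.mk.injEq]
  fin_cases i <;> fin_cases k <;> fin_cases l <;>
    simp only [Prod.mk.injEq] <;>
    push_cast <;>
    simp only [apply_ite (fun (r:ℝ) => (r : ℂ)), Complex.ofReal_one, Complex.ofReal_zero,
      Fin.zero_eta, Fin.mk_one, and_true, and_false, if_true, if_false,
      show ((0:Fin 2) = 1) = False by simp, show ((1:Fin 2) = 0) = False by simp,
      eq_self_iff_true, if_neg, ite_false, ite_true] <;>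
    ring

lemma kron_cross (w w' : W) (i j : Fin 2) (hij : i ≠ j) :
    rOuter (dirac ((w, i) : W × Fin 2) - dirac (w', j))
      + rOuter (dirac ((w, i+1) : W × Fin 2) - dirac (w', j+1))
      = (2:ℂ)⁻¹ • (rOuter (dirac w + dirac w') ⊗ₖ Qm)
        + (2:ℂ)⁻¹ • (rOuter (dirac w - dirac w') ⊗ₖ Qp) := by
  ext ⟨a, k⟩ ⟨b, l⟩
  simp only [rOuter, Qm, Qp, Matrix.of_apply, Pi.sub_apply, Pi.add_apply, dirac,
    Matrix.kroneckerMap_apply, Matrix.add_apply, Matrix.smul_apply, smul_eq_mul, Prod.mk.injEq]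
  fin_cases i <;> fin_cases j <;> (try exact absurd rfl hij) <;> fin_cases k <;> fin_cases l <;>
    simp only [Prod.mk.injEq] <;>
    push_cast <;>
    simp only [apply_ite (fun (r:ℝ) => (r : ℂ)), Complex.ofReal_one, Complex.ofReal_zero,
      Fin.zero_eta, Fin.mk_one, and_true, and_false, if_true, if_false,
      show ((0:Fin 2) = 1) = False by simp, show ((1:Fin 2) = 0) = False by simp,
      show ((0:Fin 2) + 1) = 1 by rfl, show ((1:Fin 2) + 1) = 0 by rfl,
      eq_self_iff_true, ite_false, ite_true] <;>
    ring

/-! ### Pairing up the cross edges -/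

def FF (G : SimpleGraph (W × Fin 2)) [DecidableRel G.Adj]
    (x : (W × Fin 2) × (W × Fin 2)) : Matrix (W × Fin 2) (W × Fin 2) ℂ :=
  if G.Adj x.1 x.2 then (2:ℂ)⁻¹ • rOuter (dirac x.1 - dirac x.2) else 0

def GG (G : SimpleGraph (W × Fin 2)) [DecidableRel G.Adj]
    (x : (W × Fin 2) × (W × Fin 2)) : Matrix (W × Fin 2) (W × Fin 2) ℂ :=
  if G.Adj x.1 x.2 then
    (if x.1.2 = x.2.2 then
      (2:ℂ)⁻¹ • (rOuter (dirac x.1.1 - dirac x.2.1) ⊗ₖ rOuter (dirac x.1.2))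
     else (8:ℂ)⁻¹ • (rOuter (dirac x.1.1 + dirac x.2.1) ⊗ₖ Qm)
        + (8:ℂ)⁻¹ • (rOuter (dirac x.1.1 - dirac x.2.1) ⊗ₖ Qp))
  else 0

def flip (x : (W × Fin 2) × (W × Fin 2)) : (W × Fin 2) × (W × Fin 2) :=
  if x.1.2 = x.2.2 then x else ((x.1.1, x.1.2 + 1), (x.2.1, x.2.2 + 1))

lemma fin2_add_one_add_one (i : Fin 2) : i + 1 + 1 = i := by fin_cases i <;> rfl

lemma flip_invol : Function.Involutive (flip (W := W)) := by
  rintro ⟨⟨w, i⟩, ⟨w', j⟩⟩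
  unfold flip
  by_cases hs : i = j
  · simp [hs]
  · rw [if_neg hs]
    have h2 : ¬ (((w, i + 1), (w', j + 1)) : (W × Fin 2) × (W × Fin 2)).1.2
        = ((w, i+1), (w', j+1)).2.2 := by
      simpa using fun h : i + 1 = j + 1 => hs (by
        have := congrArg (· + 1) h
        simpa [fin2_add_one_add_one] using this)
    rw [if_neg h2]
    simp [fin2_add_one_add_one]

lemma flip_adj (G : SimpleGraph (W × Fin 2)) [DecidableRel G.Adj]
    (hAdj : ∀ w w' : W, G.Adj (w, 0) (w', 1) → G.Adj (w, 1) (w', 0))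
    (x : (W × Fin 2) × (W × Fin 2)) (h : G.Adj x.1 x.2) : G.Adj (flip x).1 (flip x).2 := by
  obtain ⟨⟨w, i⟩, ⟨w', j⟩⟩ := x
  unfold flip
  by_cases hs : (((w, i), (w', j)) : (W × Fin 2) × (W × Fin 2)).1.2 = ((w, i), (w', j)).2.2
  · rw [if_pos hs]; exact h
  · rw [if_neg hs]
    simp only at hs ⊢
    fin_cases i <;> fin_cases j <;> simp_all <;>
      first
      | exact (hAdj w' w h.symm).symm
      | exact hAdj w w' h

lemma claimA (G : SimpleGraph (W × Fin 2)) [DecidableRel G.Adj]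
    (hAdj : ∀ w w' : W, G.Adj (w, 0) (w', 1) → G.Adj (w, 1) (w', 0))
    (x : (W × Fin 2) × (W × Fin 2)) :
    FF G x + FF G (flip x) = GG G x + GG G (flip x) := by
  by_cases hadj : G.Adj x.1 x.2
  · by_cases hs : x.1.2 = x.2.2
    · have hfx : flip x = x := if_pos hs
      rw [hfx]
      have hFG : FF G x = GG G x := by
        obtain ⟨⟨w, i⟩, ⟨w', j⟩⟩ := x
        have hij : i = j := hs
        subst hij
        unfold FF GG
        rw [if_pos hadj, if_pos hadj, if_pos rfl, kron_same]
      rw [hFG]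
    · obtain ⟨⟨w, i⟩, ⟨w', j⟩⟩ := x
      have hij : i ≠ j := hs
      have hfx : flip ((w, i), (w', j)) = ((w, i+1), (w', j+1)) := if_neg hs
      have hadj' : G.Adj (w, i+1) (w', j+1) := by
        have := flip_adj G hAdj ((w, i), (w', j)) hadj
        rwa [hfx] at this
      have hs' : ¬ (i + 1 = j + 1) := fun h => hij (by
        have := congrArg (· + 1) h
        simpa [fin2_add_one_add_one] using this)
      rw [hfx]
      unfold FF GG
      rw [if_pos hadj, if_pos hadj', if_pos hadj, if_pos hadj']
      simp only
      rw [if_neg hij, if_neg hs']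
      have key := kron_cross w w' i j hij
      have lhs_eq : (2:ℂ)⁻¹ • rOuter (dirac ((w, i) : W × Fin 2) - dirac (w', j))
          + (2:ℂ)⁻¹ • rOuter (dirac ((w, i+1) : W × Fin 2) - dirac (w', j+1))
          = (2:ℂ)⁻¹ • (rOuter (dirac ((w, i) : W × Fin 2) - dirac (w', j))
            + rOuter (dirac ((w, i+1) : W × Fin 2) - dirac (w', j+1))) := by
        rw [smul_add]
      rw [lhs_eq, key]
      match_scalars <;> ring
  · have hadj2 : ¬ G.Adj (flip x).1 (flip x).2 := fun h => by
      have h2 := flip_adj G hAdj (flip x) h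
      rw [flip_invol x] at h2
      exact hadj h2
    unfold FF GG
    rw [if_neg hadj, if_neg hadj, if_neg hadj2, if_neg hadj2]

lemma sum_FF_eq_sum_GG (G : SimpleGraph (W × Fin 2)) [DecidableRel G.Adj]
    (hAdj : ∀ w w' : W, G.Adj (w, 0) (w', 1) → G.Adj (w, 1) (w', 0)) :
    ∑ x, FF G x = ∑ x, GG G x := by
  have hinv : Function.Involutive (flip (W := W)) := flip_invol
  have h1 : ∑ x, FF G (flip x) = ∑ x, FF G x := by
    have := Equiv.sum_comp hinv.toPerm (FF G)
    simpa [Function.Involutive.coe_toPerm] using this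
  have h1g : ∑ x, GG G (flip x) = ∑ x, GG G x := by
    have := Equiv.sum_comp hinv.toPerm (GG G)
    simpa [Function.Involutive.coe_toPerm] using this
  have h3 : ∑ x, (FF G x + FF G (flip x)) = ∑ x, (GG G x + GG G (flip x)) :=
    Finset.sum_congr rfl fun x _ => claimA G hAdj x
  rw [Finset.sum_add_distrib, Finset.sum_add_distrib, h1, h1g] at h3
  have h4 : (2:ℂ) • ∑ x, FF G x = (2:ℂ) • ∑ x, GG G x := by
    rw [two_smul, two_smul]; exact h3
  have h5 := congrArg (fun m => (2:ℂ)⁻¹ • m) h4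
  simpa [smul_smul] using h5

/-! ### The explicit Kronecker factors -/

def MM (G : SimpleGraph (W × Fin 2)) [DecidableRel G.Adj] (r : ℝ)
    (kt : ((W × Fin 2) × (W × Fin 2)) × Fin 2) : Matrix W W ℂ :=
  if G.Adj kt.1.1 kt.1.2 then
    (if kt.1.1.2 = kt.1.2.2 then
      (if kt.2 = 0 then ((r/2 : ℝ) : ℂ) • rOuter (dirac kt.1.1.1 - dirac kt.1.2.1) else 0)
     else
      (if kt.2 = 0 then ((r/8 : ℝ) : ℂ) • rOuter (dirac kt.1.1.1 + dirac kt.1.2.1)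
       else ((r/8 : ℝ) : ℂ) • rOuter (dirac kt.1.1.1 - dirac kt.1.2.1)))
  else 0

def NN (kt : ((W × Fin 2) × (W × Fin 2)) × Fin 2) : Matrix (Fin 2) (Fin 2) ℂ :=
  if kt.1.1.2 = kt.1.2.2 then (if kt.2 = 0 then rOuter (dirac kt.1.1.2) else 1)
  else (if kt.2 = 0 then Qm else Qp)

lemma MM_posSemidef (G : SimpleGraph (W × Fin 2)) [DecidableRel G.Adj] {r : ℝ} (hr : 0 ≤ r)
    (kt : ((W × Fin 2) × (W × Fin 2)) × Fin 2) : (MM G r kt).PosSemidef := by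
  unfold MM
  split_ifs <;>
    first
    | exact Matrix.PosSemidef.zero
    | exact posSemidef_real_smul (by positivity) (rOuter_posSemidef _)

lemma NN_posSemidef (kt : ((W × Fin 2) × (W × Fin 2)) × Fin 2) : (NN (W := W) kt).PosSemidef := by
  unfold NN Qm Qp
  split_ifs <;>
    first
    | exact Matrix.PosSemidef.one
    | exact rOuter_posSemidef _

lemma smul_GG_eq (G : SimpleGraph (W × Fin 2)) [DecidableRel G.Adj] (r : ℝ)
    (x : (W × Fin 2) × (W × Fin 2)) :
    ((r : ℝ) : ℂ) • GG G x = MM G r (x, 0) ⊗ₖ NN (x, 0) + MM G r (x, 1) ⊗ₖ NN (x, 1) := by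
  unfold GG MM NN
  by_cases hadj : G.Adj x.1 x.2
  · by_cases hs : x.1.2 = x.2.2
    · simp only [if_pos hadj, if_pos hs, if_pos rfl,
        show ((1 : Fin 2) = 0) = False by simp, if_false, ite_true, ite_false]
      rw [Matrix.zero_kronecker, Matrix.smul_kronecker, add_zero, smul_smul]
      match_scalars
      push_cast
      ring
    · simp only [if_pos hadj, if_neg hs, if_pos rfl,
        show ((1 : Fin 2) = 0) = False by simp, if_false, ite_true, ite_false]
      rw [Matrix.smul_kronecker, Matrix.smul_kronecker, smul_add, smul_smul, smul_smul]
      match_scalars <;> (push_cast; ring)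
  · simp only [if_neg hadj]
    rw [Matrix.zero_kronecker, Matrix.zero_kronecker, add_zero, smul_zero]

/-! ### Trace of the Laplacian -/

lemma trace_lap {V : Type*} [Fintype V] [DecidableEq V] (G : SimpleGraph V)
    [DecidableRel G.Adj] :
    (G.lapMatrix ℂ).trace = (2 * G.edgeFinset.card : ℂ) := by
  unfold Matrix.trace
  have hdiag : ∀ u, (G.lapMatrix ℂ).diag u = ((G.degree u : ℕ) : ℂ) := by
    intro u
    simp [Matrix.diag, SimpleGraph.lapMatrix, SimpleGraph.degMatrix,
      SimpleGraph.adjMatrix_apply, SimpleGraph.irrefl]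
  rw [Finset.sum_congr rfl fun u _ => hdiag u, ← Nat.cast_sum,
    SimpleGraph.sum_degrees_eq_twice_card_edges]
  push_cast
  ring

end SepAux

theorem odd_even_edge_pairing_separable
    {W : Type*} [Fintype W] [DecidableEq W] [Nonempty W]
    (G : SimpleGraph (W × Fin 2)) [DecidableRel G.Adj]
    (hE : G.edgeFinset.Nonempty)
    (hAdj : ∀ w w' : W, G.Adj (w, 0) (w', 1) → G.Adj (w, 1) (w', 0)) :
    Separable (lapState G) := by
  classical
  have hcard : 0 < G.edgeFinset.card := Finset.card_pos.mpr hE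
  have hcpos : (0 : ℝ) < 2 * G.edgeFinset.card := by
    have h2 : (0:ℕ) < 2 * G.edgeFinset.card := by omega
    exact_mod_cast h2
  set r : ℝ := (2 * G.edgeFinset.card : ℝ)⁻¹ with hr
  have hr0 : 0 ≤ r := inv_nonneg.mpr hcpos.le
  have hCne : (2 * (G.edgeFinset.card : ℂ)) ≠ 0 := by
    have : ((2 * G.edgeFinset.card : ℕ) : ℂ) ≠ 0 := by
      exact_mod_cast Nat.cast_ne_zero.mpr (show (2 * G.edgeFinset.card : ℕ) ≠ 0 by omega)
    simpa [Nat.cast_mul] using this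
  have htrace : (lapState G).trace = 1 := by
    unfold lapState
    rw [Matrix.trace_smul, SepAux.trace_lap, smul_eq_mul]
    exact inv_mul_cancel₀ hCne
  have hrC : ((r : ℝ) : ℂ) = (2 * (G.edgeFinset.card : ℂ))⁻¹ := by
    rw [hr, Complex.ofReal_inv]
    push_cast
    ring
  have hsum : lapState G = ∑ kt : ((W × Fin 2) × (W × Fin 2)) × Fin 2,
      SepAux.MM G r kt ⊗ₖ SepAux.NN kt := by
    have hFF : G.lapMatrix ℂ = ∑ x, SepAux.FF G x := SepAux.lap_eq_sum G
    calc lapState G = ((r : ℝ) : ℂ) • G.lapMatrix ℂ := by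
          unfold lapState
          rw [hrC]
      _ = ((r : ℝ) : ℂ) • ∑ x, SepAux.FF G x := by rw [← hFF]
      _ = ((r : ℝ) : ℂ) • ∑ x, SepAux.GG G x := by rw [SepAux.sum_FF_eq_sum_GG G hAdj]
      _ = ∑ x, ((r : ℝ) : ℂ) • SepAux.GG G x := Finset.smul_sum
      _ = ∑ x, (SepAux.MM G r (x, 0) ⊗ₖ SepAux.NN (x, 0)
            + SepAux.MM G r (x, 1) ⊗ₖ SepAux.NN (x, 1)) :=
          Finset.sum_congr rfl fun x _ => SepAux.smul_GG_eq G r x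
      _ = ∑ kt : ((W × Fin 2) × (W × Fin 2)) × Fin 2, SepAux.MM G r kt ⊗ₖ SepAux.NN kt := by
          rw [show (∑ kt : ((W × Fin 2) × (W × Fin 2)) × Fin 2,
                SepAux.MM G r kt ⊗ₖ SepAux.NN kt)
              = ∑ x : (W × Fin 2) × (W × Fin 2), ∑ t : Fin 2,
                SepAux.MM G r (x, t) ⊗ₖ SepAux.NN (x, t) from
            Fintype.sum_prod_type _]
          exact Finset.sum_congr rfl fun x _ =>
            (Fin.sum_univ_two (fun t => SepAux.MM G r (x, t) ⊗ₖ SepAux.NN (x, t))).symm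
  exact SepAux.separable_of_decomp htrace (SepAux.MM G r) SepAux.NN
    (SepAux.MM_posSemidef G hr0) SepAux.NN_posSemidef hsum
end
end
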